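/- arXiv:2009.06298 — 4 statements merged into one kernel-verified Lean document; each statement's English description precedes it below -/
import Mathlib

section
/- Let p > 3 be a prime and F a finite field of characteristic p over which m(x) = x^{2p} − x^{2p−1} + 2x^{p+1} + 3^{−1}x^3 + 1 splits completely with roots α_1,…,α_{2p}, assume gcd(m'(x), x^4 − (3 − 3^{−1})x^3 + 1) = 1 in F_p[x], and set v_i := (α_i^{p−1} + α_i)^{−1} and η := −2. If Σ_{i∈I} α_i ≠ 1/2 for every subset I ⊆ {1,…,2p} with |I| = p, then C_p(α,v,η) is a self-dual MDS code of length 2p over F; otherwise C_p(α,v,η) is a self-dual NMDS code of length 2p over F. -/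
open Finset Polynomial

noncomputable section

/-- The twisted generalized Reed–Solomon (TGRS) code of length `n` and dimension `k`,
with evaluation points `α`, multipliers `v`, hook `k-1`, twist `1` and twist
coefficient `η`:  the set of words `(v i * f (α i))_i` where
`f(x) = Σ_{j<k} a_j x^j + η a_{k-1} x^k`. -/
def TGRSCode (F : Type*) [Field F] (n k : ℕ) (α v : Fin n → F) (η : F) :
    Set (Fin n → F) :=
  {c | ∃ a : ℕ → F, c = fun i =>
    v i * ((∑ j ∈ Finset.range k, a j * α i ^ j) + η * a (k - 1) * α i ^ k)}

/-- The dual of a code `C ⊆ F^n` under the standard inner product. -/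
def dualCode {F : Type*} [Field F] {n : ℕ} (C : Set (Fin n → F)) :
    Set (Fin n → F) :=
  {x | ∀ c ∈ C, ∑ i, x i * c i = 0}

/-- A code is self-dual if it coincides with its dual. -/
def IsSelfDual {F : Type*} [Field F] {n : ℕ} (C : Set (Fin n → F)) : Prop :=
  C = dualCode C

/-- The Hamming weight of a word. -/
def hwt {F : Type*} [Field F] {n : ℕ} (c : Fin n → F) : ℕ :=
  {i | c i ≠ 0}.ncard

/-- `C` has minimum (Hamming) distance exactly `d`. -/
def IsMinDist {F : Type*} [Field F] {n : ℕ} (C : Set (Fin n → F)) (d : ℕ) : Prop :=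
  (∃ c ∈ C, c ≠ 0 ∧ hwt c = d) ∧ ∀ c ∈ C, c ≠ 0 → d ≤ hwt c

namespace TGRSAux

variable {F : Type*} [Field F] {ι : Type*} [DecidableEq ι]

/-- Vieta: second-highest coefficient of the nodal polynomial. -/
lemma coeff_nodal_card_sub_one (s : Finset ι) (α : ι → F) (hs : s.Nonempty) :
    (Lagrange.nodal s α).coeff (#s - 1) = -∑ i ∈ s, α i := by
  classical
  induction s using Finset.induction_on with
  | empty => simp at hs
  | @insert a s ha ih =>
    rcases s.eq_empty_or_nonempty with rfl | hs'
    · simp [Lagrange.nodal]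
    · rw [Lagrange.nodal_insert_eq_nodal ha, card_insert_of_notMem ha]
      have hc : #s + 1 - 1 = #s := by omega
      have hc1 : #s = (#s - 1) + 1 := by
        have := hs'.card_pos; omega
      rw [hc, sub_mul, coeff_sub]
      have hx : (X * Lagrange.nodal s α).coeff #s
          = (Lagrange.nodal s α).coeff (#s - 1) := by
        conv_lhs => rw [hc1]
        rw [coeff_X_mul]
      rw [hx, coeff_C_mul]
      have hmon : (Lagrange.nodal s α).coeff #s = 1 := by
        have := (Lagrange.nodal_monic (s := s) (v := α)).coeff_natDegree
        rwa [Lagrange.natDegree_nodal] at this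
      rw [hmon, ih hs', sum_insert ha]
      ring

/-- Lagrange: sum of evaluations against nodal weights gives the top coefficient. -/
lemma sum_eval_mul_nodalWeight (s : Finset ι) (α : ι → F) (hinj : Set.InjOn α s)
    (hs : s.Nonempty) (f : F[X]) (hf : f.degree < #s) :
    ∑ i ∈ s, f.eval (α i) * Lagrange.nodalWeight s α i = f.coeff (#s - 1) := by
  classical
  conv_rhs => rw [Lagrange.eq_interpolate hinj hf]
  rw [Lagrange.interpolate_apply, finset_sum_coeff]
  refine (Finset.sum_congr rfl fun i hi => ?_).symm
  rw [coeff_C_mul]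
  congr 1
  have hb : Lagrange.basis s α i
      = C (Lagrange.nodalWeight s α i) * Lagrange.nodal (s.erase i) α := by
    rw [Lagrange.basis_eq_prod_sub_inv_mul_nodal_div hi,
      ← Lagrange.nodal_erase_eq_nodal_div hi]
  rw [hb, coeff_C_mul]
  have hdeg : (Lagrange.nodal (s.erase i) α).natDegree = #s - 1 := by
    rw [Lagrange.natDegree_nodal, card_erase_of_mem hi]
  have hmon : (Lagrange.nodal (s.erase i) α).coeff (#s - 1) = 1 := by
    have := (Lagrange.nodal_monic (s := s.erase i) (v := α)).coeff_natDegree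
    rwa [hdeg] at this
  rw [hmon, mul_one]

/-- If `f` vanishes on distinct nodes, the nodal polynomial divides `f`. -/
lemma nodal_dvd_of_roots (s : Finset ι) (α : ι → F) (hinj : Set.InjOn α s) (f : F[X])
    (hroots : ∀ i ∈ s, f.eval (α i) = 0) : Lagrange.nodal s α ∣ f := by
  classical
  induction s using Finset.induction_on generalizing f with
  | empty => simpa [Lagrange.nodal] using (one_dvd f)
  | @insert a s ha ih =>
    have hfa : f.eval (α a) = 0 := hroots a (mem_insert_self a s)
    obtain ⟨g, hg⟩ := (dvd_iff_isRoot (p := f) (a := α a)).2 hfa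
    rw [Lagrange.nodal_insert_eq_nodal ha, hg]
    refine mul_dvd_mul_left _ (ih (hinj.mono (by simp [Finset.subset_insert])) g ?_)
    intro i hi
    have hne : α i - α a ≠ 0 := by
      refine sub_ne_zero_of_ne fun h => ha ?_
      have : i = a := hinj (by simp [hi]) (by simp) h
      rwa [← this]
    have := hroots i (mem_insert_of_mem hi)
    rw [hg, eval_mul, eval_sub, eval_X, eval_C] at this
    rcases mul_eq_zero.1 this with h | h
    · exact absurd h hne
    · exact h

open scoped Classical in
/-- Number of indices where a nonzero polynomial vanishes is at most its degree. -/
lemma card_filter_eval_eq_zero_le (s : Finset ι) (α : ι → F) (hinj : Set.InjOn α s)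
    (f : F[X]) (hf : f ≠ 0) :
    #(s.filter fun i => f.eval (α i) = 0) ≤ f.natDegree := by
  classical
  set t := s.filter fun i => f.eval (α i) = 0 with ht
  have hdvd : Lagrange.nodal t α ∣ f := by
    refine nodal_dvd_of_roots t α (hinj.mono ?_) f ?_
    · exact_mod_cast Finset.filter_subset _ s
    · intro i hi; exact (Finset.mem_filter.1 hi).2
  have := Polynomial.natDegree_le_of_dvd hdvd hf
  rwa [Lagrange.natDegree_nodal] at this

/-- The dot-product bilinear form on `Fin n → F`. -/
def dotB (F : Type*) [Field F] (n : ℕ) : LinearMap.BilinForm F (Fin n → F) :=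
  LinearMap.mk₂ F (fun x y => ∑ i, x i * y i)
    (fun x x' y => by simp [add_mul, Finset.sum_add_distrib])
    (fun c x y => by simp [Finset.mul_sum, mul_assoc])
    (fun x y y' => by simp [mul_add, Finset.sum_add_distrib])
    (fun c x y => by simp [Finset.mul_sum]; apply Finset.sum_congr rfl; intros; ring)

@[simp] lemma dotB_apply {F : Type*} [Field F] {n : ℕ} (x y : Fin n → F) :
    dotB F n x y = ∑ i, x i * y i := rfl

lemma dotB_isRefl (F : Type*) [Field F] (n : ℕ) : (dotB F n).IsRefl := by
  intro x y h
  simp only [dotB_apply] at h ⊢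
  rw [← h]
  exact Finset.sum_congr rfl fun i _ => mul_comm _ _

lemma dotB_nondeg (F : Type*) [Field F] (n : ℕ) : (dotB F n).Nondegenerate := by
  refine (dotB_isRefl F n).nondegenerate_iff_separatingLeft.2 ?_
  intro x hx
  funext i
  have := hx (Pi.single i 1)
  simp only [dotB_apply, Pi.single_apply, mul_ite, mul_one, mul_zero,
    Finset.sum_ite_eq', Finset.mem_univ, if_true] at this
  simpa using this

lemma cast3_ne (p : ℕ) (hp3 : 3 < p) (F : Type*) [Field F] [CharP F p] : (3 : F) ≠ 0 := by
  intro h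
  have h' : ((3 : ℕ) : F) = 0 := by exact_mod_cast h
  have := (CharP.cast_eq_zero_iff F p 3).1 h'
  have := Nat.le_of_dvd (by norm_num) this
  omega

lemma cast2_ne (p : ℕ) (hp3 : 3 < p) (F : Type*) [Field F] [CharP F p] : (2 : F) ≠ 0 := by
  intro h
  have h' : ((2 : ℕ) : F) = 0 := by exact_mod_cast h
  have := (CharP.cast_eq_zero_iff F p 2).1 h'
  have := Nat.le_of_dvd (by norm_num) this
  omega

lemma deriv_m (p : ℕ) (hp3 : 3 < p) (F : Type*) [Field F] [CharP F p] :
    derivative (X ^ (2 * p) - X ^ (2 * p - 1) + 2 * X ^ (p + 1)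
        + Polynomial.C ((3 : F)⁻¹) * X ^ 3 + 1 : F[X]) = (X ^ (p - 1) + X) ^ 2 := by
  have h3 : (3 : F) ≠ 0 := cast3_ne p hp3 F
  have c1 : ((2 * p : ℕ) : F) = 0 := by
    push_cast [CharP.cast_eq_zero F p]; ring
  have c2 : ((2 * p - 1 : ℕ) : F) = -1 := by
    rw [Nat.cast_sub (by omega)]
    push_cast [CharP.cast_eq_zero F p]; ring
  have c3 : ((p + 1 : ℕ) : F) = 1 := by
    push_cast [CharP.cast_eq_zero F p]; ring
  have hsq : (X ^ (p - 1) + X : F[X]) ^ 2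
      = X ^ (2 * p - 2) + 2 * X ^ p + X ^ 2 := by
    rw [add_sq, ← pow_mul, show (p - 1) * 2 = 2 * p - 2 by omega, sq,
      show (2 : F[X]) * X ^ (p - 1) * X = 2 * X ^ p by
        rw [mul_assoc, ← pow_succ, show p - 1 + 1 = p by omega]]
  rw [hsq]
  simp only [derivative_add, derivative_sub, derivative_one, derivative_C_mul,
    derivative_X_pow, derivative_mul, derivative_ofNat, derivative_X]
  rw [c1, c2, c3]
  have e1 : 2 * p - 1 - 1 = 2 * p - 2 := by omega
  have e2 : p + 1 - 1 = p := by omega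
  rw [e1, e2]
  simp only [map_zero, map_neg, map_one]
  push_cast
  rw [show (Polynomial.C ((3:F)⁻¹) * (Polynomial.C (3:F) * X ^ (3-1))) =
    Polynomial.C ((3:F)⁻¹ * 3) * X ^ 2 by rw [← mul_assoc, ← map_mul],
    inv_mul_cancel₀ h3]
  simp

lemma alpha_inj (p : ℕ) (hp : p.Prime) (hp3 : 3 < p)
    (F : Type*) [Field F] [CharP F p]
    (α : Fin (2 * p) → F)
    (hsplit : (X ^ (2 * p) - X ^ (2 * p - 1) + 2 * X ^ (p + 1)
        + Polynomial.C ((3 : F)⁻¹) * X ^ 3 + 1 : F[X]) =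
      ∏ i, (X - Polynomial.C (α i)))
    (hgcd : IsCoprime
      (derivative (X ^ (2 * p) - X ^ (2 * p - 1) + 2 * X ^ (p + 1)
        + Polynomial.C ((3 : ZMod p)⁻¹) * X ^ 3 + 1 : (ZMod p)[X]))
      (X ^ 4 - Polynomial.C ((3 : ZMod p) - (3 : ZMod p)⁻¹) * X ^ 3 + 1
        : (ZMod p)[X])) :
    Function.Injective α := by
  classical
  haveI : Fact p.Prime := ⟨hp⟩
  have hder := deriv_m p hp3 F
  intro i j hij
  by_contra hne
  set m : F[X] := X ^ (2 * p) - X ^ (2 * p - 1) + 2 * X ^ (p + 1)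
      + Polynomial.C ((3 : F)⁻¹) * X ^ 3 + 1 with hmdef
  set β := α i with hβ
  obtain ⟨r, hr⟩ : (X - Polynomial.C β) ^ 2 ∣ m := by
    rw [hsplit, ← Finset.mul_prod_erase _ _ (Finset.mem_univ i)]
    have hj : j ∈ (univ : Finset (Fin (2*p))).erase i := by
      simp [Finset.mem_erase, Ne.symm hne]
    rw [← Finset.mul_prod_erase _ _ hj, ← hij, sq, ← mul_assoc]
    exact Dvd.intro _ rfl
  have hmβ : m.eval β = 0 := by
    rw [hr]; simp
  have hm'β : (derivative m).eval β = 0 := by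
    rw [hr]
    simp only [derivative_mul, derivative_pow, derivative_sub, derivative_X, derivative_C]
    simp
  have hβ0 : β ≠ 0 := by
    intro h0
    rw [hmdef] at hmβ
    simp only [h0, eval_add, eval_sub, eval_pow, eval_mul, eval_X, eval_C, eval_one,
      eval_ofNat] at hmβ
    rw [zero_pow (by omega), zero_pow (by omega), zero_pow (by omega),
      zero_pow (by omega)] at hmβ
    simp at hmβ
  have hpow : β ^ (p - 1) = -β := by
    have := hm'β
    rw [hder] at this
    simp only [eval_pow, eval_add, eval_X] at this
    have h2 : β ^ (p-1) + β = 0 := by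
      exact pow_eq_zero_iff (n := 2) (by norm_num) |>.1 this
    exact eq_neg_of_add_eq_zero_left h2
  have hgβ : β ^ 4 - ((3:F) - (3:F)⁻¹) * β ^ 3 + 1 = 0 := by
    have e1 : β ^ (2 * p) = β ^ 4 := by
      rw [show 2 * p = (p - 1) + ((p - 1) + 2) by omega, pow_add, pow_add, hpow]
      ring
    have e2 : β ^ (2 * p - 1) = β ^ 3 := by
      rw [show 2 * p - 1 = (p - 1) + ((p - 1) + 1) by omega, pow_add, pow_add, hpow]
      ring
    have e3 : β ^ (p + 1) = -β ^ 3 := by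
      rw [show p + 1 = (p - 1) + 2 by omega, pow_add, hpow]
      ring
    rw [hmdef] at hmβ
    simp only [eval_add, eval_sub, eval_pow, eval_mul, eval_X, eval_C, eval_one,
      eval_ofNat] at hmβ
    rw [e1, e2, e3] at hmβ
    rw [← hmβ]
    ring
  set φ : ZMod p →+* F := ZMod.castHom dvd_rfl F with hφ
  have hmap : Polynomial.map φ (X ^ (2 * p) - X ^ (2 * p - 1) + 2 * X ^ (p + 1)
        + Polynomial.C ((3 : ZMod p)⁻¹) * X ^ 3 + 1 : (ZMod p)[X]) = m := by
    rw [hmdef]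
    simp only [Polynomial.map_add, Polynomial.map_sub, Polynomial.map_pow,
      Polynomial.map_mul, Polynomial.map_ofNat, Polynomial.map_one, Polynomial.map_X,
      Polynomial.map_C, map_inv₀, map_ofNat]
  have hmapg : Polynomial.map φ (X ^ 4 - Polynomial.C ((3 : ZMod p) - (3 : ZMod p)⁻¹)
      * X ^ 3 + 1 : (ZMod p)[X])
      = (X ^ 4 - Polynomial.C ((3:F) - (3:F)⁻¹) * X ^ 3 + 1 : F[X]) := by
    simp only [Polynomial.map_add, Polynomial.map_sub, Polynomial.map_pow,
      Polynomial.map_mul, Polynomial.map_one, Polynomial.map_X, Polynomial.map_C,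
      map_sub, map_inv₀, map_ofNat]
    norm_num
  have hco : IsCoprime (derivative m)
      (X ^ 4 - Polynomial.C ((3:F) - (3:F)⁻¹) * X ^ 3 + 1 : F[X]) := by
    have := hgcd.map (Polynomial.mapRingHom φ)
    simp only [Polynomial.coe_mapRingHom] at this
    rwa [← derivative_map, hmap, hmapg] at this
  have hunit := hco.map (Polynomial.evalRingHom β)
  simp only [Polynomial.coe_evalRingHom, hm'β] at hunit
  rw [isCoprime_zero_left] at hunit
  have : eval β (X ^ 4 - Polynomial.C ((3:F) - (3:F)⁻¹) * X ^ 3 + 1 : F[X]) = 0 := by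
    simp only [eval_add, eval_sub, eval_pow, eval_mul, eval_X, eval_C, eval_one]
    exact hgβ
  rw [this] at hunit
  exact not_isUnit_zero hunit

/-- The twisted polynomial attached to a coefficient function. -/
def fp (p : ℕ) (η : F) (a : ℕ → F) : F[X] :=
  (∑ j ∈ Finset.range p, Polynomial.C (a j) * X ^ j) + Polynomial.C (η * a (p-1)) * X ^ p

lemma eval_fp (p : ℕ) (η : F) (a : ℕ → F) (x : F) :
    (fp p η a).eval x = (∑ j ∈ Finset.range p, a j * x ^ j) + η * a (p-1) * x ^ p := by
  simp [fp, eval_finset_sum]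

lemma coeff_fp (p : ℕ) (η : F) (a : ℕ → F) (t : ℕ) :
    (fp p η a).coeff t
      = (if t < p then a t else 0) + (if t = p then η * a (p-1) else 0) := by
  classical
  rw [fp, coeff_add, finset_sum_coeff]
  congr 1
  · simp only [coeff_C_mul, coeff_X_pow, mul_ite, mul_one, mul_zero]
    rw [Finset.sum_ite_eq (Finset.range p) t a]
    simp [Finset.mem_range]
  · rw [coeff_C_mul, coeff_X_pow]
    by_cases h : t = p <;> simp [h]

lemma natDegree_fp_le (p : ℕ) (η : F) (a : ℕ → F) : (fp p η a).natDegree ≤ p := by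
  rw [natDegree_le_iff_coeff_eq_zero]
  intro t ht
  rw [coeff_fp]
  have h1 : ¬ t < p := by omega
  have h2 : t ≠ p := by omega
  simp [h1, h2]

lemma natDegree_fp_le' (p : ℕ) (η : F) (a : ℕ → F) (ha : a (p-1) = 0) (hp : 2 ≤ p) :
    (fp p η a).natDegree ≤ p - 2 := by
  rw [natDegree_le_iff_coeff_eq_zero]
  intro t ht
  rw [coeff_fp]
  by_cases h2 : t = p
  · subst h2; simp [ha]
  · by_cases h1 : t < p
    · have h4 : t = p - 1 := by omega
      rw [h4]
      simp [ha, h1, show p - 1 < p by omega]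
    · simp [h1, h2]

lemma fp_eq_zero (p : ℕ) (η : F) (a : ℕ → F) (h : ∀ j < p, a j = 0) (hp : 0 < p) :
    fp p η a = 0 := by
  have hap : a (p-1) = 0 := h _ (by omega)
  rw [fp, hap]
  have : ∀ j ∈ Finset.range p, Polynomial.C (a j) * (X:F[X]) ^ j = 0 := by
    intro j hj
    rw [h j (Finset.mem_range.1 hj)]; simp
  rw [Finset.sum_congr rfl this]
  simp

lemma fp_congr (p : ℕ) (η : F) (a b : ℕ → F) (h : ∀ j < p, a j = b j) (hp : 0 < p) :
    fp p η a = fp p η b := by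
  unfold fp
  rw [h (p-1) (by omega)]
  congr 1
  apply Finset.sum_congr rfl
  intro j hj
  rw [h j (Finset.mem_range.1 hj)]

lemma coeff_fp_eq_zero_of_gt (p : ℕ) (η : F) (a : ℕ → F) {t : ℕ} (ht : p < t) :
    (fp p η a).coeff t = 0 := by
  rw [coeff_fp]
  have h1 : ¬ t < p := by omega
  have h2 : t ≠ p := by omega
  simp [h1, h2]

/-- top coefficient of a product of twisted polynomials -/
lemma coeff_mul_fp_top (p : ℕ) (hp : 2 ≤ p) (η : F) (a b : ℕ → F) :
    (fp p η a * fp p η b).coeff (2*p) = η * a (p-1) * (η * b (p-1)) := by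
  classical
  rw [coeff_mul]
  rw [Finset.sum_eq_single_of_mem (p, p) (by simp [Finset.mem_antidiagonal]; omega)]
  · rw [coeff_fp, coeff_fp]
    simp
  · rintro ⟨j, k⟩ hjk hne
    rw [Finset.HasAntidiagonal.mem_antidiagonal] at hjk
    rcases lt_or_ge p j with h | h
    · rw [coeff_fp_eq_zero_of_gt p η a h, zero_mul]
    · rcases lt_or_ge p k with h' | h'
      · rw [coeff_fp_eq_zero_of_gt p η b h', mul_zero]
      · exfalso
        have hj : j = p := by omega
        have hk : k = p := by omega
        exact hne (by rw [hj, hk])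

lemma coeff_mul_fp_subtop (p : ℕ) (hp : 2 ≤ p) (η : F) (a b : ℕ → F) :
    (fp p η a * fp p η b).coeff (2*p - 1)
      = a (p-1) * (η * b (p-1)) + η * a (p-1) * b (p-1) := by
  classical
  rw [coeff_mul]
  have hsub : ({(p-1, p), (p, p-1)} : Finset (ℕ × ℕ)) ⊆ Finset.HasAntidiagonal.antidiagonal (2*p-1) := by
    intro x hx
    simp only [Finset.mem_insert, Finset.mem_singleton] at hx
    rcases hx with rfl | rfl <;> (rw [Finset.HasAntidiagonal.mem_antidiagonal]; omega)
  rw [← Finset.sum_subset hsub]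
  · have hne : ((p-1 : ℕ), p) ≠ (p, p-1) := by
      intro h
      have := congrArg Prod.fst h
      simp at this; omega
    rw [Finset.sum_insert (by simp [hne]), Finset.sum_singleton]
    rw [coeff_fp, coeff_fp, coeff_fp, coeff_fp]
    have h1 : p - 1 < p := by omega
    have h2 : p - 1 ≠ p := by omega
    have h3 : ¬ p < p := by omega
    simp [h1, h2, h3]
  · rintro ⟨j, k⟩ hjk hnot
    rw [Finset.HasAntidiagonal.mem_antidiagonal] at hjk
    simp only [Finset.mem_insert, Finset.mem_singleton] at hnot
    rcases lt_or_ge p j with h | h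
    · rw [coeff_fp_eq_zero_of_gt p η a h, zero_mul]
    · rcases lt_or_ge p k with h' | h'
      · rw [coeff_fp_eq_zero_of_gt p η b h', mul_zero]
      · exfalso
        apply hnot
        have : (j = p - 1 ∧ k = p) ∨ (j = p ∧ k = p - 1) := by omega
        rcases this with ⟨h1, h2⟩ | ⟨h1, h2⟩
        · left; rw [h1, h2]
        · right; rw [h1, h2]

lemma master_sum (p : ℕ) (α : Fin (2*p) → F)
    (hcoeff : (Lagrange.nodal Finset.univ α).coeff (2*p - 1) = -1)
    (hsum : ∀ f : F[X], f.degree < ((Finset.univ : Finset (Fin (2*p))).card : WithBot ℕ) →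
      ∑ i, f.eval (α i) * Lagrange.nodalWeight Finset.univ α i
        = f.coeff ((Finset.univ : Finset (Fin (2*p))).card - 1))
    (h : F[X]) (hdeg : h.natDegree ≤ 2*p) :
    ∑ i, h.eval (α i) * Lagrange.nodalWeight Finset.univ α i
      = h.coeff (2*p-1) + h.coeff (2*p) := by
  classical
  have hcard : ((Finset.univ : Finset (Fin (2*p))).card) = 2*p := by
    simp
  set M := Lagrange.nodal (Finset.univ : Finset (Fin (2*p))) α with hM
  have hMdeg : M.natDegree = 2*p := by
    rw [hM, Lagrange.natDegree_nodal, hcard]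
  have hMmon : M.Monic := Lagrange.nodal_monic
  set c := h.coeff (2*p) with hc
  set r := h - Polynomial.C c * M with hrdef
  have hrdeg : r.degree < (((Finset.univ : Finset (Fin (2*p))).card : ℕ) : WithBot ℕ) := by
    rw [hcard]
    rw [Polynomial.degree_lt_iff_coeff_zero]
    intro t ht
    rw [hrdef, coeff_sub, coeff_C_mul]
    rcases eq_or_lt_of_le ht with rfl | hlt
    · rw [← hMdeg, hMmon.coeff_natDegree, hMdeg, mul_one, ← hc, sub_self]
    · have h1 : h.coeff t = 0 := by
        apply Polynomial.coeff_eq_zero_of_natDegree_lt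
        exact lt_of_le_of_lt hdeg (by exact_mod_cast hlt)
      have h2 : M.coeff t = 0 := by
        apply Polynomial.coeff_eq_zero_of_natDegree_lt
        rw [hMdeg]
        exact_mod_cast hlt
      rw [h1, h2, mul_zero, sub_zero]
  have hre : h = r + Polynomial.C c * M := by rw [hrdef]; ring
  have heval : ∀ i : Fin (2*p), h.eval (α i) = r.eval (α i) := by
    intro i
    rw [hre]
    simp [hM, Lagrange.eval_nodal_at_node (Finset.mem_univ i)]
  rw [Finset.sum_congr rfl fun i _ => by rw [heval i]]
  rw [hsum r hrdeg, hcard]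
  rw [hrdef, coeff_sub, coeff_C_mul, hcoeff]
  ring

/-- A polynomial of degree ≤ p satisfying the twist relation is a twisted polynomial. -/
lemma eq_fp_of_twist (p : ℕ) (hp : 0 < p) (η : F) (f : F[X]) (hdeg : f.natDegree ≤ p)
    (htw : f.coeff p = η * f.coeff (p-1)) : f = fp p η (fun j => f.coeff j) := by
  ext t
  rw [coeff_fp]
  by_cases h2 : t = p
  · subst h2
    simp [htw]
  · by_cases h1 : t < p
    · simp [h1, h2]
    · have : f.coeff t = 0 := by
        apply Polynomial.coeff_eq_zero_of_natDegree_lt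
        omega
      simp [h1, h2, this]

/-- coefficient function extension from `Fin p` -/
def ext (p : ℕ) (a : Fin p → F) : ℕ → F := fun j => if h : j < p then a ⟨j, h⟩ else 0

lemma ext_add (p : ℕ) (a b : Fin p → F) :
    ext p (a + b) = fun j => ext p a j + ext p b j := by
  funext j
  unfold ext
  by_cases h : j < p <;> simp [h]

lemma ext_smul (p : ℕ) (c : F) (a : Fin p → F) :
    ext p (c • a) = fun j => c * ext p a j := by
  funext j
  unfold ext
  by_cases h : j < p <;> simp [h]

lemma fp_add (p : ℕ) (η : F) (a b : ℕ → F) :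
    fp p η (fun j => a j + b j) = fp p η a + fp p η b := by
  ext t
  rw [coeff_add, coeff_fp, coeff_fp, coeff_fp]
  by_cases h1 : t < p <;> by_cases h2 : t = p <;> simp [h1, h2] <;> ring

lemma fp_smul (p : ℕ) (η : F) (c : F) (a : ℕ → F) :
    fp p η (fun j => c * a j) = Polynomial.C c * fp p η a := by
  ext t
  rw [coeff_C_mul, coeff_fp, coeff_fp]
  by_cases h1 : t < p <;> by_cases h2 : t = p <;> simp [h1, h2] <;> ring

/-- The generator map of the TGRS code. -/
def Phi (p : ℕ) (α v : Fin (2*p) → F) (η : F) : (Fin p → F) →ₗ[F] (Fin (2*p) → F) where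
  toFun a := fun i => v i * (fp p η (ext p a)).eval (α i)
  map_add' a b := by
    funext i
    simp only [ext_add, fp_add, eval_add, Pi.add_apply, mul_add]
  map_smul' c a := by
    funext i
    simp only [ext_smul, fp_smul, eval_mul, eval_C, Pi.smul_apply, smul_eq_mul,
      RingHom.id_apply]
    ring

end TGRSAux

open TGRSAux in
/-- in the setting of the construction from
`m(x) = x^{2p} - x^{2p-1} + 2x^{p+1} + 3⁻¹ x³ + 1`, with `v_i = (α_i^{p-1} + α_i)⁻¹`
and `η = -2`: if `Σ_{i∈I} α_i ≠ 1/2` for every `I` of size `p` then `C_p(α,v,η)` is a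
self-dual MDS code; otherwise it is a self-dual NMDS code. -/
theorem tgrs_selfdual_mds_or_nmds_Fq2p (p : ℕ) (hp : p.Prime) (hp3 : 3 < p)
    (F : Type*) [Field F] [Fintype F] [CharP F p]
    (α : Fin (2 * p) → F)
    (hsplit : (X ^ (2 * p) - X ^ (2 * p - 1) + 2 * X ^ (p + 1)
        + Polynomial.C ((3 : F)⁻¹) * X ^ 3 + 1 : F[X]) =
      ∏ i, (X - Polynomial.C (α i)))
    (hgcd : IsCoprime
      (derivative (X ^ (2 * p) - X ^ (2 * p - 1) + 2 * X ^ (p + 1)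
        + Polynomial.C ((3 : ZMod p)⁻¹) * X ^ 3 + 1 : (ZMod p)[X]))
      (X ^ 4 - Polynomial.C ((3 : ZMod p) - (3 : ZMod p)⁻¹) * X ^ 3 + 1
        : (ZMod p)[X])) :
    ((∀ I : Finset (Fin (2 * p)), I.card = p → ∑ i ∈ I, α i ≠ 1 / 2) →
      IsSelfDual (TGRSCode F (2 * p) p α
          (fun i => (α i ^ (p - 1) + α i)⁻¹) (-2)) ∧
        IsMinDist (TGRSCode F (2 * p) p α
          (fun i => (α i ^ (p - 1) + α i)⁻¹) (-2)) (2 * p - p + 1)) ∧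
    ((∃ I : Finset (Fin (2 * p)), I.card = p ∧ ∑ i ∈ I, α i = 1 / 2) →
      IsSelfDual (TGRSCode F (2 * p) p α
          (fun i => (α i ^ (p - 1) + α i)⁻¹) (-2)) ∧
        IsMinDist (TGRSCode F (2 * p) p α
          (fun i => (α i ^ (p - 1) + α i)⁻¹) (-2)) (2 * p - p) ∧
        IsMinDist (dualCode (TGRSCode F (2 * p) p α
          (fun i => (α i ^ (p - 1) + α i)⁻¹) (-2))) p) := by
  classical
  classical
  haveI : Fact p.Prime := ⟨hp⟩
  haveI : Nonempty (Fin (2*p)) := ⟨⟨0, by omega⟩⟩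
  set v : Fin (2*p) → F := fun i => (α i ^ (p - 1) + α i)⁻¹ with hvdef
  have h2F : (2:F) ≠ 0 := cast2_ne p hp3 F
  have hinj : Function.Injective α := alpha_inj p hp hp3 F α hsplit hgcd
  have hder := deriv_m p hp3 F
  set M : F[X] := Lagrange.nodal Finset.univ α with hM
  have hsplitM : (X ^ (2*p) - X ^ (2*p-1) + 2*X^(p+1)
      + Polynomial.C ((3:F)⁻¹) * X^3 + 1 : F[X]) = M := by
    rw [hM, Lagrange.nodal_eq]; exact hsplit
  have hderM : derivative M = (X ^ (p - 1) + X) ^ 2 := by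
    rw [← hsplitM]; exact hder
  have hMcoeff : M.coeff (2*p - 1) = -1 := by
    rw [← hsplitM]
    rw [show (2:F[X]) * X^(p+1) = X^(p+1) + X^(p+1) from two_mul _]
    simp only [coeff_add, coeff_sub, coeff_X_pow, coeff_C_mul, coeff_one, if_true]
    rw [if_neg (by omega : ¬ 2*p-1 = 2*p), if_neg (by omega : ¬ 2*p-1 = p+1),
      if_neg (by omega : ¬ 2*p-1 = 3), if_neg (by omega : ¬ 2*p-1 = 0)]
    ring
  have hLag : ∀ f : F[X], f.degree < (((Finset.univ : Finset (Fin (2*p))).card : ℕ) : WithBot ℕ) →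
      ∑ i, f.eval (α i) * Lagrange.nodalWeight Finset.univ α i
        = f.coeff ((Finset.univ : Finset (Fin (2*p))).card - 1) := by
    intro f hf
    exact sum_eval_mul_nodalWeight Finset.univ α hinj.injOn Finset.univ_nonempty f hf
  have hmaster : ∀ h : F[X], h.natDegree ≤ 2*p →
      ∑ i, h.eval (α i) * Lagrange.nodalWeight Finset.univ α i
        = h.coeff (2*p-1) + h.coeff (2*p) :=
    fun h hh => master_sum p α hMcoeff hLag h hh
  have hw : ∀ i, v i ^ 2 = Lagrange.nodalWeight Finset.univ α i := by
    intro i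
    rw [Lagrange.nodalWeight_eq_eval_derivative_nodal (Finset.mem_univ i), ← hM, hderM]
    simp only [eval_pow, eval_add, eval_X]
    rw [hvdef, ← inv_pow]
  have hvne : ∀ i, v i ≠ 0 := by
    intro i h0
    have hwi := hw i
    rw [h0, zero_pow (by norm_num)] at hwi
    exact Lagrange.nodalWeight_ne_zero hinj.injOn (Finset.mem_univ i) hwi.symm
  have hmem : ∀ c, c ∈ TGRSCode F (2*p) p α v (-2) ↔
      ∃ a : ℕ → F, c = fun i => v i * (fp p (-2) a).eval (α i) := by
    intro c
    constructor
    · rintro ⟨a, rfl⟩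
      exact ⟨a, by funext i; rw [eval_fp]⟩
    · rintro ⟨a, rfl⟩
      exact ⟨a, by funext i; rw [eval_fp]⟩
  have horth : ∀ a b : ℕ → F,
      ∑ i, (v i * (fp p (-2) a).eval (α i)) * (v i * (fp p (-2) b).eval (α i)) = 0 := by
    intro a b
    have hterm : ∀ i, (v i * (fp p (-2) a).eval (α i)) * (v i * (fp p (-2) b).eval (α i))
        = (fp p (-2) a * fp p (-2) b).eval (α i) * Lagrange.nodalWeight Finset.univ α i := by
      intro i
      rw [← hw i, eval_mul]
      ring
    rw [Finset.sum_congr rfl fun i _ => hterm i]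
    rw [hmaster _ (le_trans natDegree_mul_le
      (by have h1 := natDegree_fp_le p (-2:F) a
          have h2 := natDegree_fp_le p (-2:F) b
          omega))]
    rw [coeff_mul_fp_subtop p (by omega) _ a b, coeff_mul_fp_top p (by omega) _ a b]
    ring
  -- the code as a submodule
  set W : Submodule F (Fin (2*p) → F) := LinearMap.range (Phi p α v (-2)) with hW
  have hPhiRepr : ∀ a : Fin p → F,
      Phi p α v (-2) a = fun i => v i * (fp p (-2) (TGRSAux.ext p a)).eval (α i) := fun a => rfl
  have hWset : (W : Set (Fin (2*p) → F)) = TGRSCode F (2*p) p α v (-2) := by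
    ext c
    rw [SetLike.mem_coe, hW, LinearMap.mem_range, hmem c]
    constructor
    · rintro ⟨a, rfl⟩
      exact ⟨TGRSAux.ext p a, rfl⟩
    · rintro ⟨a, rfl⟩
      refine ⟨fun j => a j.val, ?_⟩
      rw [hPhiRepr]
      funext i
      rw [fp_congr p (-2:F) (TGRSAux.ext p (fun j : Fin p => a j.val)) a
        (fun j hj => by simp [TGRSAux.ext, hj]) (by omega)]
  have hfzero : ∀ a : ℕ → F, (∀ i, v i * (fp p (-2) a).eval (α i) = 0) → fp p (-2) a = 0 := by
    intro a ha
    by_contra hne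
    have hcard := card_filter_eval_eq_zero_le Finset.univ α hinj.injOn _ hne
    have hfilter : Finset.univ.filter (fun i => (fp p (-2) a).eval (α i) = 0)
        = Finset.univ := by
      apply Finset.filter_true_of_mem
      intro i _
      have := ha i
      rcases mul_eq_zero.1 this with h | h
      · exact absurd h (hvne i)
      · exact h
    rw [hfilter] at hcard
    have h1 : (Finset.univ : Finset (Fin (2*p))).card = 2*p := by simp
    have h2 := natDegree_fp_le p (-2:F) a
    omega
  have hPhiInj : Function.Injective (Phi p α v (-2)) := by
    rw [← LinearMap.ker_eq_bot]
    rw [LinearMap.ker_eq_bot']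
    intro a ha
    have hz : fp p (-2) (TGRSAux.ext p a) = 0 := by
      apply hfzero
      intro i
      have := congrFun ha i
      rw [hPhiRepr] at this
      simpa using this
    funext j
    have hj := j.isLt
    have hcoeff : (fp p (-2) (TGRSAux.ext p a)).coeff j.val = 0 := by rw [hz]; simp
    rw [coeff_fp] at hcoeff
    rw [if_pos j.isLt, if_neg (by omega : ¬ (j.val = p))] at hcoeff
    have : TGRSAux.ext p a j.val = a j := by simp [TGRSAux.ext, j.isLt]
    rw [this] at hcoeff
    simpa using hcoeff
  have hrankW : Module.finrank F W = p := by
    rw [hW, LinearMap.finrank_range_of_inj hPhiInj]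
    simp
  have hfinV : Module.finrank F (Fin (2*p) → F) = 2*p := by simp
  have hWle : W ≤ (dotB F (2*p)).orthogonal W := by
    intro x hx
    rw [LinearMap.BilinForm.mem_orthogonal_iff]
    intro y hy
    rw [hW, LinearMap.mem_range] at hx hy
    obtain ⟨a, rfl⟩ := hy
    obtain ⟨b, rfl⟩ := hx
    rw [hPhiRepr, hPhiRepr]
    rw [show (dotB F (2*p)) (fun i => v i * (fp p (-2) (TGRSAux.ext p a)).eval (α i))
        (fun i => v i * (fp p (-2) (TGRSAux.ext p b)).eval (α i))
      = ∑ i, (v i * (fp p (-2) (TGRSAux.ext p a)).eval (α i)) * (v i * (fp p (-2) (TGRSAux.ext p b)).eval (α i))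
      from rfl]
    exact horth (TGRSAux.ext p a) (TGRSAux.ext p b)
  have hWeq : W = (dotB F (2*p)).orthogonal W := by
    apply Submodule.eq_of_le_of_finrank_le hWle
    rw [LinearMap.BilinForm.finrank_orthogonal (dotB_nondeg F (2*p)) W,
      hfinV, hrankW]
    omega
  have hdual : dualCode (TGRSCode F (2*p) p α v (-2))
      = (((dotB F (2*p)).orthogonal W : Submodule F (Fin (2*p) → F)) : Set (Fin (2*p) → F)) := by
    ext x
    rw [SetLike.mem_coe, LinearMap.BilinForm.mem_orthogonal_iff]
    constructor
    · intro h c hc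
      have hc' : c ∈ TGRSCode F (2*p) p α v (-2) := by rw [← hWset]; exact hc
      have := h c hc'
      rw [show (dotB F (2*p)) c x = ∑ i, c i * x i from rfl]
      rw [← this]
      exact Finset.sum_congr rfl fun i _ => mul_comm _ _
    · intro h c hc
      have hc' : c ∈ W := by rw [← hWset] at hc; exact hc
      have := h c hc'
      rw [show (dotB F (2*p)) c x = ∑ i, c i * x i from rfl] at this
      rw [← this]
      exact Finset.sum_congr rfl fun i _ => mul_comm _ _
  have hSelfDual : IsSelfDual (TGRSCode F (2*p) p α v (-2)) := by
    unfold IsSelfDual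
    rw [hdual, ← hWset]
    exact congrArg _ hWeq
  -- Hamming weight computations
  have hwt_eq : ∀ c : Fin (2*p) → F, hwt c = #(Finset.univ.filter fun i => c i ≠ 0) := by
    intro c
    rw [hwt, Set.ncard_eq_toFinset_card', Set.toFinset_setOf]
  have hwt_code : ∀ a : ℕ → F,
      hwt (fun i => v i * (fp p (-2) a).eval (α i))
        = 2*p - #(Finset.univ.filter fun i => (fp p (-2) a).eval (α i) = 0) := by
    intro a
    rw [hwt_eq]
    have heqf : (Finset.univ.filter fun i => (fun i => v i * (fp p (-2) a).eval (α i)) i ≠ 0)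
        = Finset.univ.filter (fun i => ¬ ((fp p (-2) a).eval (α i) = 0)) := by
      apply Finset.filter_congr
      intro i _
      simp only [ne_eq, mul_eq_zero, not_or]
      constructor
      · intro h; exact h.2
      · intro h; exact ⟨hvne i, h⟩
    rw [heqf, Finset.filter_not, Finset.card_sdiff_of_subset (Finset.filter_subset _ _)]
    simp
  have hfilter_le : ∀ a : ℕ → F, fp p (-2) a ≠ 0 →
      #(Finset.univ.filter fun i => (fp p (-2) a).eval (α i) = 0) ≤ p := by
    intro a ha
    have := card_filter_eval_eq_zero_le Finset.univ α hinj.injOn _ ha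
    have h2 := natDegree_fp_le p (-2:F) a
    omega
  -- general lower bound p
  have hLBp : ∀ c ∈ TGRSCode F (2*p) p α v (-2), c ≠ 0 → p ≤ hwt c := by
    intro c hc hc0
    obtain ⟨a, rfl⟩ := (hmem c).1 hc
    have hfne : fp p (-2) a ≠ 0 := by
      intro h
      apply hc0
      funext i
      rw [h]
      simp
    rw [hwt_code a]
    have := hfilter_le a hfne
    omega
  -- MDS lower bound p+1 under the sum condition
  have hLBmds : (∀ I : Finset (Fin (2 * p)), I.card = p → ∑ i ∈ I, α i ≠ 1 / 2) →
      ∀ c ∈ TGRSCode F (2*p) p α v (-2), c ≠ 0 → p + 1 ≤ hwt c := by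
    intro hSum c hc hc0
    obtain ⟨a, rfl⟩ := (hmem c).1 hc
    have hfne : fp p (-2) a ≠ 0 := by
      intro h
      apply hc0
      funext i
      rw [h]
      simp
    rw [hwt_code a]
    by_contra hlt
    push_neg at hlt
    have hge : p ≤ #(Finset.univ.filter fun i => (fp p (-2) a).eval (α i) = 0) := by omega
    obtain ⟨I, hIsub, hIcard⟩ := Finset.exists_subset_card_eq hge
    have hIroots : ∀ i ∈ I, (fp p (-2) a).eval (α i) = 0 := by
      intro i hi
      exact (Finset.mem_filter.1 (hIsub hi)).2
    have hdvd : Lagrange.nodal I α ∣ fp p (-2) a :=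
      nodal_dvd_of_roots I α hinj.injOn _ hIroots
    by_cases hA : a (p-1) = 0
    · have h1 := natDegree_fp_le' p (-2:F) a hA (by omega)
      have h2 := Polynomial.natDegree_le_of_dvd hdvd hfne
      rw [Lagrange.natDegree_nodal, hIcard] at h2
      omega
    · obtain ⟨q, hq⟩ := hdvd
      have hqne : q ≠ 0 := by
        intro h; rw [h, mul_zero] at hq; exact hfne hq
      have hnodne : (Lagrange.nodal I α : F[X]) ≠ 0 := Lagrange.nodal_ne_zero
      have hdeg : (fp p (-2) a).natDegree = p + q.natDegree := by
        rw [hq, Polynomial.natDegree_mul hnodne hqne, Lagrange.natDegree_nodal, hIcard]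
      have hq0 : q.natDegree = 0 := by
        have := natDegree_fp_le p (-2:F) a
        omega
      obtain ⟨c0, rfl⟩ : ∃ c0, q = Polynomial.C c0 :=
        ⟨q.coeff 0, Polynomial.eq_C_of_natDegree_eq_zero hq0⟩
      have hnodmon : (Lagrange.nodal I α).Monic := Lagrange.nodal_monic
      have hcoefftop : (fp p (-2) a).coeff p = c0 := by
        rw [hq, Polynomial.coeff_mul_C]
        have : (Lagrange.nodal I α).coeff p = 1 := by
          have := hnodmon.coeff_natDegree
          rwa [Lagrange.natDegree_nodal, hIcard] at this
        rw [this, one_mul]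
      have hcoeffsub : (fp p (-2) a).coeff (p-1) = (-∑ i ∈ I, α i) * c0 := by
        rw [hq, Polynomial.coeff_mul_C]
        have hIne : I.Nonempty := by
          rw [← Finset.card_pos, hIcard]; omega
        have := coeff_nodal_card_sub_one I α hIne
        rw [hIcard] at this
        rw [this]
      rw [coeff_fp] at hcoefftop hcoeffsub
      rw [if_neg (by omega : ¬ p < p), if_pos rfl, zero_add] at hcoefftop
      rw [if_pos (by omega : p - 1 < p), if_neg (by omega : ¬ p - 1 = p), add_zero] at hcoeffsub
      -- a (p-1) = (-Σ) * (-2 * a (p-1))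
      have hsum2 : (∑ i ∈ I, α i) = 1/2 := by
        have h1 : a (p-1) = (-∑ i ∈ I, α i) * (-2 * a (p-1)) := by
          rw [← hcoefftop] at hcoeffsub
          exact hcoeffsub
        have h2 : a (p-1) * (1 - 2 * (∑ i ∈ I, α i)) = 0 := by
          linear_combination h1
        rcases mul_eq_zero.1 h2 with h | h
        · exact absurd h hA
        · rw [eq_div_iff h2F]
          linear_combination -h
      exact hSum I hIcard hsum2
    -- membership of an explicitly given twisted polynomial
  have hmem_poly : ∀ f : F[X], f.natDegree ≤ p → f.coeff p = (-2) * f.coeff (p-1) →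
      (fun i => v i * f.eval (α i)) ∈ TGRSCode F (2*p) p α v (-2) := by
    intro f hdeg htw
    rw [hmem]
    refine ⟨fun j => f.coeff j, ?_⟩
    funext i
    rw [← eq_fp_of_twist p (by omega) (-2 : F) f hdeg htw]
  have hwt_poly : ∀ f : F[X], f.natDegree ≤ p → f.coeff p = (-2) * f.coeff (p-1) →
      hwt (fun i => v i * f.eval (α i))
        = 2*p - #(Finset.univ.filter fun i => f.eval (α i) = 0) := by
    intro f hdeg htw
    have hrepr := eq_fp_of_twist p (by omega) (-2 : F) f hdeg htw
    calc hwt (fun i => v i * f.eval (α i))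
        = hwt (fun i => v i * (fp p (-2) (fun j => f.coeff j)).eval (α i)) := by rw [← hrepr]
      _ = 2*p - #(Finset.univ.filter fun i => (fp p (-2) (fun j => f.coeff j)).eval (α i) = 0) :=
          hwt_code _
      _ = 2*p - #(Finset.univ.filter fun i => f.eval (α i) = 0) := by rw [← hrepr]
  have hne_poly : ∀ f : F[X], f.natDegree ≤ p → f.coeff p = (-2) * f.coeff (p-1) → f ≠ 0 →
      (fun i => v i * f.eval (α i)) ≠ 0 := by
    intro f hdeg htw hf0 hc
    have hrepr := eq_fp_of_twist p (by omega) (-2 : F) f hdeg htw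
    apply hf0
    rw [hrepr]
    apply hfzero
    intro i
    have := congrFun hc i
    rw [← hrepr]
    simpa using this
  -- Case-2 minimum weight word
  have hexist2 : (∃ I : Finset (Fin (2 * p)), I.card = p ∧ ∑ i ∈ I, α i = 1 / 2) →
      ∃ c ∈ TGRSCode F (2*p) p α v (-2), c ≠ 0 ∧ hwt c = p := by
    rintro ⟨I, hIcard, hIsum⟩
    set f : F[X] := Polynomial.C (-2 : F) * Lagrange.nodal I α with hfdef
    have hmonI : (Lagrange.nodal I α).Monic := Lagrange.nodal_monic
    have hndI : (Lagrange.nodal I α).natDegree = p := by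
      rw [Lagrange.natDegree_nodal, hIcard]
    have hIne : I.Nonempty := by rw [← Finset.card_pos, hIcard]; omega
    have hdeg : f.natDegree ≤ p := by
      rw [hfdef]
      exact le_trans (Polynomial.natDegree_C_mul_le _ _) (le_of_eq hndI)
    have hctop : f.coeff p = -2 := by
      rw [hfdef, coeff_C_mul]
      have : (Lagrange.nodal I α).coeff p = 1 := by
        have := hmonI.coeff_natDegree
        rwa [hndI] at this
      rw [this, mul_one]
    have hcsub : f.coeff (p-1) = 1 := by
      rw [hfdef, coeff_C_mul]
      have := coeff_nodal_card_sub_one I α hIne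
      rw [hIcard] at this
      rw [this, hIsum]
      field_simp
    have htw : f.coeff p = (-2) * f.coeff (p-1) := by rw [hctop, hcsub]; ring
    have hfilter : (Finset.univ.filter fun i => f.eval (α i) = 0) = I := by
      ext i
      simp only [Finset.mem_filter, Finset.mem_univ, true_and]
      rw [hfdef, eval_mul, eval_C]
      constructor
      · intro h
        rcases mul_eq_zero.1 h with h' | h'
        · exact absurd h' (by norm_num [h2F])
        · by_contra hiI
          rw [Lagrange.eval_nodal] at h'
          obtain ⟨j, hj, hj0⟩ := Finset.prod_eq_zero_iff.1 h'
          have : α i = α j := by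
            have := sub_eq_zero.1 hj0
            exact this
          have : i = j := hinj this
          exact hiI (this ▸ hj)
      · intro hi
        rw [Lagrange.eval_nodal_at_node hi, mul_zero]
    refine ⟨fun i => v i * f.eval (α i), hmem_poly f hdeg htw, ?_, ?_⟩
    · apply hne_poly f hdeg htw
      rw [hfdef]
      apply mul_ne_zero
      · intro h
        rw [← Polynomial.C_0] at h
        have := Polynomial.C_injective h
        norm_num [h2F] at this
      · exact Lagrange.nodal_ne_zero
    · rw [hwt_poly f hdeg htw, hfilter, hIcard]
      omega
  -- Case-1 minimum weight word: weight exactly p+1 assuming the MDS bound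
  have hexist1 : ∃ c ∈ TGRSCode F (2*p) p α v (-2), c ≠ 0 ∧ p ≤ hwt c ∧ hwt c ≤ p + 1 := by
    obtain ⟨J, -, hJcard⟩ := Finset.exists_subset_card_eq
      (show p - 1 ≤ (Finset.univ : Finset (Fin (2*p))).card by simp; omega)
    set e : F := ∑ i ∈ J, α i with hedef
    set q : F[X] := Polynomial.C (-2 : F) * X + Polynomial.C (1 + (-2) * e) with hqdef
    have h2ne : (-2 : F) ≠ 0 := by
      intro h
      apply h2F
      have : (2:F) = -(-2) := by ring
      rw [this, h, neg_zero]
    have hJne : J.Nonempty := by rw [← Finset.card_pos, hJcard]; omega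
    have hmonJ : (Lagrange.nodal J α).Monic := Lagrange.nodal_monic
    have hndJ : (Lagrange.nodal J α).natDegree = p - 1 := by
      rw [Lagrange.natDegree_nodal, hJcard]
    have hndq : q.natDegree = 1 := Polynomial.natDegree_linear h2ne
    have hqne : q ≠ 0 := by
      intro h
      have : q.coeff 1 = 0 := by rw [h]; simp
      rw [hqdef, coeff_add, coeff_C_mul, coeff_X_one, coeff_C] at this
      simp at this
      exact h2F this
    set f : F[X] := Lagrange.nodal J α * q with hfdef
    have hfne : f ≠ 0 := mul_ne_zero Lagrange.nodal_ne_zero hqne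
    have hndf : f.natDegree = p := by
      rw [hfdef, Polynomial.natDegree_mul Lagrange.nodal_ne_zero hqne, hndJ, hndq]
      omega
    have hctop : f.coeff p = -2 := by
      have h1 : f.coeff p = f.leadingCoeff := by
        rw [Polynomial.leadingCoeff, hndf]
      rw [h1, hfdef, Polynomial.leadingCoeff_mul, hmonJ.leadingCoeff, one_mul, hqdef,
        Polynomial.leadingCoeff_linear h2ne]
    have hcsub : f.coeff (p-1) = 1 := by
      have hsplit2 : f = Polynomial.C (-2:F) * (Lagrange.nodal J α * X)
          + Lagrange.nodal J α * Polynomial.C (1 + (-2) * e) := by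
        rw [hfdef, hqdef]
        ring
      rw [hsplit2, coeff_add, coeff_C_mul, Polynomial.coeff_mul_C]
      have hx : (Lagrange.nodal J α * X).coeff (p-1) = (Lagrange.nodal J α).coeff (p-2) := by
        rw [show p - 1 = (p-2) + 1 by omega, Polynomial.coeff_mul_X]
      have hv2 : (Lagrange.nodal J α).coeff (p-2) = -e := by
        have := coeff_nodal_card_sub_one J α hJne
        rw [hJcard] at this
        rw [show p - 2 = p - 1 - 1 by omega]
        exact this
      have hv1 : (Lagrange.nodal J α).coeff (p-1) = 1 := by
        have := hmonJ.coeff_natDegree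
        rwa [hndJ] at this
      rw [hx, hv2, hv1]
      ring
    have htw : f.coeff p = (-2) * f.coeff (p-1) := by rw [hctop, hcsub]; ring
    have hdeg : f.natDegree ≤ p := le_of_eq hndf
    refine ⟨fun i => v i * f.eval (α i), hmem_poly f hdeg htw, hne_poly f hdeg htw hfne, ?_, ?_⟩
    · exact hLBp _ (hmem_poly f hdeg htw) (hne_poly f hdeg htw hfne)
    · rw [hwt_poly f hdeg htw]
      have hJsub : J ⊆ Finset.univ.filter fun i => f.eval (α i) = 0 := by
        intro i hi
        rw [Finset.mem_filter]
        refine ⟨Finset.mem_univ i, ?_⟩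
        rw [hfdef, eval_mul, Lagrange.eval_nodal_at_node hi, zero_mul]
      have := Finset.card_le_card hJsub
      rw [hJcard] at this
      omega
  -- conclusion
  constructor
  · intro hSum
    refine ⟨hSelfDual, ?_, ?_⟩
    · obtain ⟨c, hc, hc0, hlb, hub⟩ := hexist1
      refine ⟨c, hc, hc0, ?_⟩
      have := hLBmds hSum c hc hc0
      omega
    · intro c hc hc0
      have := hLBmds hSum c hc hc0
      omega
  · intro hEx
    have hmd : IsMinDist (TGRSCode F (2*p) p α v (-2)) p := by
      constructor
      · exact hexist2 hEx
      · exact hLBp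
    refine ⟨hSelfDual, ?_, ?_⟩
    · rw [show 2*p - p = p by omega]
      exact hmd
    · rw [← hSelfDual]
      exact hmd
end
end

section
/- In the setting where q is an odd prime power, n ≥ 6 an even integer with gcd(q,n) = 1, b ∈ F_q\{0}, m(x) = x^n + b x^{n−1} + 1 splits completely over F_q with roots α_1,…,α_n each satisfying α_i ≠ b(1−n)n^{−1} and α_i^n ≠ n−1, v_i ∈ F_{q²} satisfies v_i² = α_i/(α_i^n − n + 1), and η := 2b^{−1}: if Σ_{i∈I} α_i ≠ −b/2 for every subset I ⊆ {1,…,n} with |I| = n/2, then C_{n/2}(α,v,η) is a self-dual MDS code of length n over F_{q²}; otherwise C_{n/2}(α,v,η) is a self-dual NMDS code of length n over F_{q²}. -/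
open Finset Polynomial

noncomputable section

/-! ### Auxiliary lemmas -/

section Aux

-- leading coefficient of a Lagrange basis polynomial
lemma TGRSaux_basis_coeff {F : Type*} [Field F] {ι : Type*} [DecidableEq ι] {s : Finset ι}
    {w : ι → F} (hvs : Set.InjOn w s) {i : ι} (hi : i ∈ s) :
    (Lagrange.basis s w i).coeff (s.card - 1) = (∏ j ∈ s.erase i, (w i - w j))⁻¹ := by
  have hd := Lagrange.natDegree_basis hvs hi
  have : (Lagrange.basis s w i).coeff (s.card - 1) = (Lagrange.basis s w i).leadingCoeff := by
    rw [Polynomial.leadingCoeff, hd]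
  rw [this, Lagrange.basis, Polynomial.leadingCoeff_prod, ← Finset.prod_inv_distrib]
  refine Finset.prod_congr rfl fun j hj => ?_
  have hne : w i ≠ w j := fun h => (Finset.mem_erase.mp hj).1
    (hvs (Finset.mem_erase.mp hj).2 hi h.symm)
  rw [Lagrange.basisDivisor, Polynomial.leadingCoeff_mul, Polynomial.leadingCoeff_C,
    (Polynomial.monic_X_sub_C (w j)).leadingCoeff, mul_one]

/-- power sums against the inverse of the nodal derivative -/
lemma TGRSaux_lagrange_pow_sum {F : Type*} [Field F] {n : ℕ} {w : Fin n → F}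
    (hw : Function.Injective w) {j : ℕ} (hj : j < n) :
    ∑ i, (w i) ^ j * (∏ l ∈ Finset.univ.erase i, (w i - w l))⁻¹
      = if j = n - 1 then 1 else 0 := by
  classical
  have hvs : Set.InjOn w (Finset.univ : Finset (Fin n)) := hw.injOn
  have hcard : (Finset.univ : Finset (Fin n)).card = n :=
    Finset.card_univ.trans (Fintype.card_fin n)
  have hdeg : (X ^ j : F[X]).degree < (Finset.univ : Finset (Fin n)).card := by
    rw [Polynomial.degree_X_pow, hcard]; exact_mod_cast hj
  have h := Lagrange.eq_interpolate hvs hdeg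
  have h2 := congrArg (fun p => Polynomial.coeff p (n - 1)) h
  simp only [Lagrange.interpolate_apply, Polynomial.finset_sum_coeff, Polynomial.coeff_C_mul,
    Polynomial.eval_pow, Polynomial.eval_X, Polynomial.coeff_X_pow] at h2
  rw [show ((if n - 1 = j then (1:F) else 0) = if j = n - 1 then 1 else 0) by
    by_cases hh : j = n - 1 <;> simp [hh, Ne.symm, eq_comm]] at h2
  rw [h2]
  refine Finset.sum_congr rfl fun i _ => ?_
  rw [show (Lagrange.basis univ w i).coeff (n-1)
      = (Lagrange.basis univ w i).coeff (#univ - 1) by rw [hcard],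
    TGRSaux_basis_coeff hvs (Finset.mem_univ i)]

variable {F : Type*} [Field F]

/-- the twisted polynomial attached to a coefficient function -/
noncomputable def tp (k : ℕ) (η : F) (a : ℕ → F) : F[X] :=
  (∑ j ∈ Finset.range k, Polynomial.C (a j) * X ^ j) + Polynomial.C (η * a (k-1)) * X ^ k

lemma tp_coeff (k : ℕ) (η : F) (a : ℕ → F) (m : ℕ) :
    (tp k η a).coeff m = (if m < k then a m else 0) + (if m = k then η * a (k-1) else 0) := by
  simp only [tp, Polynomial.coeff_add, Polynomial.finset_sum_coeff, Polynomial.coeff_C_mul,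
    Polynomial.coeff_X_pow]
  congr 1
  · rw [Finset.sum_congr rfl (fun x _ => by rw [mul_ite, mul_one, mul_zero] :
      ∀ x ∈ Finset.range k, (a x * if m = x then 1 else 0) = if m = x then a x else 0),
      Finset.sum_ite_eq (Finset.range k) m a]
    simp [Finset.mem_range]
  · by_cases h : m = k <;> simp [h, eq_comm]

lemma tp_eval (k : ℕ) (η : F) (a : ℕ → F) (x : F) :
    (tp k η a).eval x = (∑ j ∈ Finset.range k, a j * x ^ j) + η * a (k-1) * x ^ k := by
  simp [tp, Polynomial.eval_finset_sum]

lemma tp_natDegree_le (k : ℕ) (η : F) (a : ℕ → F) : (tp k η a).natDegree ≤ k := by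
  refine le_trans (Polynomial.natDegree_add_le _ _) (max_le ?_ ?_)
  · refine le_trans (Polynomial.natDegree_sum_le _ _) ?_
    simp only [Finset.fold_max_le, Finset.mem_range]
    refine ⟨Nat.zero_le _, fun j hj => le_trans (Polynomial.natDegree_C_mul_le _ _) ?_⟩
    simpa using le_of_lt hj
  · exact le_trans (Polynomial.natDegree_C_mul_le _ _) (by simp)

lemma tp_coeff_lt (k : ℕ) (η : F) (a : ℕ → F) {m : ℕ} (hm : m < k) :
    (tp k η a).coeff m = a m := by
  rw [tp_coeff]; simp [hm, Nat.ne_of_lt hm]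

lemma tp_coeff_k (k : ℕ) (η : F) (a : ℕ → F) :
    (tp k η a).coeff k = η * a (k-1) := by
  rw [tp_coeff]; simp

lemma tp_coeff_gt (k : ℕ) (η : F) (a : ℕ → F) {m : ℕ} (hm : k < m) :
    (tp k η a).coeff m = 0 := by
  rw [tp_coeff]; simp [Nat.lt_asymm hm, Nat.ne_of_gt hm]

/-- polynomials with the right coefficient relation are twisted polynomials -/
lemma tp_of_poly (k : ℕ) (η : F) (P : F[X]) (hdeg : P.natDegree ≤ k)
    (hco : P.coeff k = η * P.coeff (k-1)) : tp k η (fun j => P.coeff j) = P := by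
  ext m
  rw [tp_coeff]
  rcases lt_trichotomy m k with h | h | h
  · simp [h, Nat.ne_of_lt h]
  · subst h; simp [Nat.lt_irrefl, hco]
  · have : P.coeff m = 0 := Polynomial.coeff_eq_zero_of_natDegree_lt (lt_of_le_of_lt hdeg h)
    simp [Nat.lt_asymm h, Nat.ne_of_gt h, this]

variable {K : Type*} [Field K] {n : ℕ} {b : K} {α : Fin n → K}

lemma TGRSaux_m_root (hsplit : (X ^ n + Polynomial.C b * X ^ (n - 1) + 1 : K[X]) =
    ∏ i, (X - Polynomial.C (α i))) (i : Fin n) :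
    (α i) ^ n + b * (α i) ^ (n - 1) + 1 = 0 := by
  have h := congrArg (Polynomial.eval (α i)) hsplit
  simp only [Polynomial.eval_add, Polynomial.eval_pow, Polynomial.eval_X, Polynomial.eval_mul,
    Polynomial.eval_C, Polynomial.eval_one, Polynomial.eval_prod, Polynomial.eval_sub] at h
  rw [h, Finset.prod_eq_zero (Finset.mem_univ i) (by simp)]

lemma TGRSaux_α_ne_zero (hn : 2 ≤ n)
    (hsplit : (X ^ n + Polynomial.C b * X ^ (n - 1) + 1 : K[X]) =
      ∏ i, (X - Polynomial.C (α i))) (i : Fin n) : α i ≠ 0 := by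
  intro h
  have := TGRSaux_m_root hsplit i
  rw [h, zero_pow (by omega), zero_pow (by omega)] at this
  simp at this

lemma TGRSaux_α_inj (hn : 2 ≤ n) (hnK : (n : K) ≠ 0)
    (hsplit : (X ^ n + Polynomial.C b * X ^ (n - 1) + 1 : K[X]) =
      ∏ i, (X - Polynomial.C (α i)))
    (hroot1 : ∀ i, α i ≠ b * (1 - (n : K)) * (n : K)⁻¹) :
    Function.Injective α := by
  classical
  intro i j hij
  by_contra hne
  have hdvd : (X - Polynomial.C (α i)) * (X - Polynomial.C (α i)) ∣
      ∏ l, (X - Polynomial.C (α l)) := by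
    rw [← Finset.mul_prod_erase _ _ (Finset.mem_univ i),
      ← Finset.mul_prod_erase _ _ (Finset.mem_erase.mpr ⟨Ne.symm hne, Finset.mem_univ j⟩)]
    rw [← mul_assoc]
    exact Dvd.dvd.mul_right (by rw [hij]) _
  obtain ⟨g, hg⟩ := hdvd
  have hm : (X ^ n + Polynomial.C b * X ^ (n - 1) + 1 : K[X]) =
      (X - Polynomial.C (α i)) * (X - Polynomial.C (α i)) * g := by rw [hsplit, hg]
  have hder := congrArg (fun p => Polynomial.eval (α i) (Polynomial.derivative p)) hm
  simp only [Polynomial.derivative_add, Polynomial.derivative_mul, Polynomial.derivative_one,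
    Polynomial.derivative_pow, Polynomial.derivative_X_pow, Polynomial.derivative_C,
    Polynomial.derivative_X, Polynomial.derivative_sub, Polynomial.eval_add, Polynomial.eval_mul,
    Polynomial.eval_sub, Polynomial.eval_X, Polynomial.eval_C, Polynomial.eval_pow,
    Polynomial.eval_natCast, Polynomial.eval_zero, Polynomial.eval_one, sub_self] at hder
  rw [show ((1:K) - 0) * 0 + 0 * (1 - 0) = 0 by ring] at hder
  simp only [zero_mul, mul_zero, add_zero, zero_add, mul_one] at hder
  obtain ⟨m, rfl⟩ : ∃ m, n = m + 2 := ⟨n - 2, by omega⟩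
  have h1 : (m + 2) - 1 = m + 1 := by omega
  rw [h1, show m + 1 - 1 = m from rfl] at hder
  have hα := TGRSaux_α_ne_zero hn hsplit i
  have : (α i) ^ m * (((m+2 : ℕ) : K) * α i + b * (((m+2 : ℕ) : K) - 1)) = 0 := by
    rw [← hder]; push_cast; ring
  rcases mul_eq_zero.mp this with h | h
  · exact pow_ne_zero m hα h
  · apply hroot1 i
    have hne2 : ((m+2:ℕ):K) ≠ 0 := hnK
    rw [eq_mul_inv_iff_mul_eq₀ hne2]
    linear_combination h

lemma TGRSaux_w_identity (hn : 2 ≤ n)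
    (hsplit : (X ^ n + Polynomial.C b * X ^ (n - 1) + 1 : K[X]) =
      ∏ i, (X - Polynomial.C (α i))) (i : Fin n) :
    α i * ∏ l ∈ Finset.univ.erase i, (α i - α l) = α i ^ n - (n : K) + 1 := by
  classical
  have hprod : (∏ l, (X - Polynomial.C (α l)) : K[X]) = Lagrange.nodal Finset.univ α :=
    (Lagrange.nodal_eq _ _).symm
  have hev : Polynomial.eval (α i) (Polynomial.derivative (∏ l, (X - Polynomial.C (α l))))
      = ∏ l ∈ Finset.univ.erase i, (α i - α l) := by
    rw [hprod, Lagrange.eval_nodal_derivative_eval_node_eq (Finset.mem_univ i),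
      Lagrange.eval_nodal]
  have hev2 := congrArg (fun p => Polynomial.eval (α i) (Polynomial.derivative p)) hsplit
  simp only [Polynomial.derivative_add, Polynomial.derivative_one, Polynomial.derivative_mul,
    Polynomial.derivative_C, Polynomial.derivative_X_pow, Polynomial.eval_add, Polynomial.eval_mul,
    Polynomial.eval_C, Polynomial.eval_pow, Polynomial.eval_X, Polynomial.eval_natCast,
    Polynomial.eval_zero, zero_mul, add_zero, zero_add, Polynomial.eval_mul] at hev2
  rw [hev] at hev2
  have hroot := TGRSaux_m_root hsplit i
  obtain ⟨m, rfl⟩ : ∃ m, n = m + 2 := ⟨n - 2, by omega⟩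
  rw [show m + 2 - 1 = m + 1 by omega, show m+1 - 1 = m by omega] at hev2
  rw [show m + 2 - 1 = m + 1 by omega] at hroot
  rw [← hev2]
  push_cast
  ring_nf
  ring_nf at hroot
  linear_combination ((m:K) + 1) * hroot

end Aux

/-- in the setting of the construction from `m(x) = x^n + b x^{n-1} + 1`
over `F_q`, with `v_i ∈ F_{q²}` satisfying `v_i² = α_i/(α_i^n - n + 1)` and
`η = 2b⁻¹`: if `Σ_{i∈I} α_i ≠ -b/2` for every `I` of size `n/2` then
`C_{n/2}(α,v,η)` is a self-dual MDS code over `F_{q²}`; otherwise it is a self-dual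
NMDS code over `F_{q²}`. -/
theorem tgrs_selfdual_mds_or_nmds_Fq2 (q n : ℕ) (hq : Odd q) (hqpp : IsPrimePow q)
    (hn6 : 6 ≤ n) (hneven : Even n) (hqn : Nat.Coprime q n)
    (Fq : Type*) [Field Fq] [Fintype Fq] (hcardq : Fintype.card Fq = q)
    (F : Type*) [Field F] [Fintype F] [Algebra Fq F]
    (hcardF : Fintype.card F = q ^ 2)
    (b : Fq) (hb : b ≠ 0)
    (α : Fin n → Fq)
    (hsplit : (X ^ n + Polynomial.C b * X ^ (n - 1) + 1 : Fq[X]) =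
      ∏ i, (X - Polynomial.C (α i)))
    (hroot1 : ∀ i, α i ≠ b * (1 - (n : Fq)) * (n : Fq)⁻¹)
    (hroot2 : ∀ i, α i ^ n ≠ (n : Fq) - 1)
    (v : Fin n → F)
    (hv : ∀ i, v i ^ 2 =
      algebraMap Fq F (α i) / ((algebraMap Fq F (α i)) ^ n - (n : F) + 1)) :
    ((∀ I : Finset (Fin n), I.card = n / 2 → ∑ i ∈ I, α i ≠ -b / 2) →
      IsSelfDual (TGRSCode F n (n / 2) (fun i => algebraMap Fq F (α i)) v
          (2 * (algebraMap Fq F b)⁻¹)) ∧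
        IsMinDist (TGRSCode F n (n / 2) (fun i => algebraMap Fq F (α i)) v
          (2 * (algebraMap Fq F b)⁻¹)) (n - n / 2 + 1)) ∧
    ((∃ I : Finset (Fin n), I.card = n / 2 ∧ ∑ i ∈ I, α i = -b / 2) →
      IsSelfDual (TGRSCode F n (n / 2) (fun i => algebraMap Fq F (α i)) v
          (2 * (algebraMap Fq F b)⁻¹)) ∧
        IsMinDist (TGRSCode F n (n / 2) (fun i => algebraMap Fq F (α i)) v
          (2 * (algebraMap Fq F b)⁻¹)) (n - n / 2) ∧
        IsMinDist (dualCode (TGRSCode F n (n / 2)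
          (fun i => algebraMap Fq F (α i)) v (2 * (algebraMap Fq F b)⁻¹))) (n / 2)) := by
    classical
  -- notation
  set k : ℕ := n / 2 with hkdef
  set A : Fin n → F := fun i => algebraMap Fq F (α i) with hAdef
  set B : F := algebraMap Fq F b with hBdef
  set η : F := 2 * B⁻¹ with hηdef
  set C : Set (Fin n → F) := TGRSCode F n k A v η with hCdef
  obtain ⟨t, ht⟩ := hneven
  have hn2 : 2 ≤ n := by omega
  have hk3 : 3 ≤ k := by omega
  have hkn : k < n := by omega
  have hn2k : n = k + k := by omega
  -- characteristic facts
  obtain ⟨p, hp⟩ := CharP.exists Fq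
  haveI : CharP Fq p := hp
  obtain ⟨mm, hpp, hqeq⟩ := FiniteField.card Fq p
  rw [hcardq] at hqeq
  have hpq : p ∣ q := hqeq ▸ dvd_pow_self p (by exact_mod_cast mm.ne_zero)
  have hnFq : (n : Fq) ≠ 0 := by
    intro h
    have hpn : p ∣ n := (CharP.cast_eq_zero_iff Fq p n).mp h
    have : p ∣ Nat.gcd q n := Nat.dvd_gcd hpq hpn
    rw [Nat.Coprime.gcd_eq_one hqn] at this
    exact hpp.one_lt.ne' (Nat.dvd_one.mp this)
  have h2Fq : (2 : Fq) ≠ 0 := by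
    intro h
    have hp2 : p ∣ 2 := (CharP.cast_eq_zero_iff Fq p 2).mp (by exact_mod_cast h)
    have : p = 2 := (Nat.prime_dvd_prime_iff_eq hpp Nat.prime_two).mp hp2
    rw [this] at hpq
    rw [Nat.odd_iff] at hq
    omega
  have hinj : Function.Injective (algebraMap Fq F) := (algebraMap Fq F).injective
  have h2F : (2 : F) ≠ 0 := by
    intro h
    apply h2Fq
    apply hinj
    rw [map_ofNat, h, map_zero]
  have hB0 : B ≠ 0 := fun h => hb (by apply hinj; rw [← hBdef, h, map_zero])
  have hη0 : η ≠ 0 := mul_ne_zero h2F (inv_ne_zero hB0)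
  -- root facts
  have hαinj : Function.Injective α := TGRSaux_α_inj hn2 hnFq hsplit hroot1
  have hAinj : Function.Injective A := fun i j h => hαinj (hinj h)
  have hα0 : ∀ i, α i ≠ 0 := TGRSaux_α_ne_zero hn2 hsplit
  set w : Fin n → Fq := fun i => ∏ l ∈ Finset.univ.erase i, (α i - α l) with hwdef
  have hw0 : ∀ i, w i ≠ 0 := by
    intro i
    refine Finset.prod_ne_zero_iff.mpr fun l hl => sub_ne_zero_of_ne fun h => ?_
    exact (Finset.mem_erase.mp hl).1 (hαinj h.symm)
  have hwid : ∀ i, α i * w i = α i ^ n - (n : Fq) + 1 :=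
    fun i => TGRSaux_w_identity hn2 hsplit i
  have hvw : ∀ i, v i ^ 2 = algebraMap Fq F ((w i)⁻¹) := by
    intro i
    have hd : (A i) ^ n - (n:F) + 1 = algebraMap Fq F (α i ^ n - (n:Fq) + 1) := by
      rw [map_add, map_sub, map_pow, map_natCast, map_one, hAdef]
    rw [hv i, hd, ← map_div₀]
    congr 1
    rw [← hwid i, div_mul_cancel_left₀ (hα0 i)]
  have hv0 : ∀ i, v i ≠ 0 := by
    intro i h
    have h2 := hvw i
    rw [h] at h2
    have : (w i)⁻¹ = 0 := hinj (by rw [← h2, map_zero]; ring)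
    exact inv_ne_zero (hw0 i) this
  -- power sum identities over Fq
  have hS : ∀ j, j < n → ∑ i, α i ^ j * (w i)⁻¹ = if j = n-1 then 1 else 0 :=
    fun j hj => TGRSaux_lagrange_pow_sum hαinj hj
  have hSn : ∑ i, α i ^ n * (w i)⁻¹ = -b := by
    have hstep : ∀ i : Fin n, α i ^ n * (w i)⁻¹
        = -b * (α i ^ (n-1) * (w i)⁻¹) - α i ^ 0 * (w i)⁻¹ := by
      intro i
      have hroot := TGRSaux_m_root hsplit i
      have h2 : α i ^ n = -b * α i ^ (n-1) - 1 := by linear_combination hroot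
      rw [pow_zero, h2]; ring
    rw [Finset.sum_congr rfl fun i _ => hstep i, Finset.sum_sub_distrib, ← Finset.mul_sum,
      hS (n-1) (by omega), hS 0 (by omega)]
    rw [if_pos rfl, if_neg (show ¬ (0:ℕ) = n - 1 by omega)]
    ring
  -- power sum identities over F
  have hT : ∀ j, j ≤ n → ∑ i, v i ^ 2 * (A i)^j
      = if j = n-1 then 1 else if j = n then -B else 0 := by
    intro j hj
    have hmap : ∑ i, v i ^ 2 * (A i)^j = algebraMap Fq F (∑ i, α i ^ j * (w i)⁻¹) := by
      rw [map_sum]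
      refine Finset.sum_congr rfl fun i _ => ?_
      rw [hvw i, map_mul, map_pow, mul_comm]
    rcases Nat.lt_or_ge j n with hlt | hge
    · rw [hmap, hS j hlt]
      have hjn : j ≠ n := by omega
      by_cases hh : j = n - 1 <;> simp [hh, hjn]
    · have hjn : j = n := by omega
      subst hjn
      rw [hmap, hSn, if_neg (by omega), if_pos rfl, map_neg, hBdef]
  -- the key evaluation formula
  have key_eval : ∀ P : F[X], P.natDegree ≤ n →
      ∑ i, v i ^ 2 * P.eval (A i) = P.coeff (n-1) - B * P.coeff n := by
    intro P hP
    have hev : ∀ i, P.eval (A i) = ∑ j ∈ Finset.range (n+1), P.coeff j * A i ^ j :=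
      fun i => Polynomial.eval_eq_sum_range' (by omega) (A i)
    calc ∑ i, v i ^ 2 * P.eval (A i)
        = ∑ i, ∑ j ∈ Finset.range (n+1), P.coeff j * (v i ^ 2 * A i ^ j) := by
          refine Finset.sum_congr rfl fun i _ => ?_
          rw [hev i, Finset.mul_sum]
          exact Finset.sum_congr rfl fun j _ => by ring
      _ = ∑ j ∈ Finset.range (n+1), P.coeff j * ∑ i, v i ^ 2 * A i ^ j := by
          rw [Finset.sum_comm]
          exact Finset.sum_congr rfl fun j _ => by rw [Finset.mul_sum]
      _ = ∑ j ∈ ({n-1, n} : Finset ℕ), P.coeff j * ∑ i, v i ^ 2 * A i ^ j := by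
          refine (Finset.sum_subset ?_ ?_).symm
          · intro x hx
            simp only [Finset.mem_insert, Finset.mem_singleton] at hx
            rcases hx with rfl | rfl <;> simp only [Finset.mem_range] <;> omega
          · intro x hx hnx
            simp only [Finset.mem_insert, Finset.mem_singleton, not_or] at hnx
            rw [hT x (by simp only [Finset.mem_range] at hx; omega),
              if_neg hnx.1, if_neg hnx.2, mul_zero]
      _ = P.coeff (n-1) - B * P.coeff n := by
          rw [Finset.sum_insert (by simp only [Finset.mem_singleton]; omega),
            Finset.sum_singleton, hT (n-1) (by omega), hT n le_rfl,
            if_pos rfl, if_neg (by omega : ¬ n = n - 1), if_pos rfl]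
          ring
  -- orthogonality of codewords
  have horth : ∀ a c : ℕ → F,
      ∑ i, (v i * (tp k η a).eval (A i)) * (v i * (tp k η c).eval (A i)) = 0 := by
    intro a c
    have hco1 : (tp k η a * tp k η c).coeff (n-1)
        = a (k-1) * (η * c (k-1)) + η * a (k-1) * c (k-1) := by
      rw [Polynomial.coeff_mul]
      have hsub : ({(k-1, k), (k, k-1)} : Finset (ℕ × ℕ)) ⊆ Finset.HasAntidiagonal.antidiagonal (n-1) := by
        intro x hx
        simp only [Finset.mem_insert, Finset.mem_singleton] at hx
        rcases hx with rfl | rfl <;> rw [Finset.HasAntidiagonal.mem_antidiagonal] <;> omega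
      refine ((Finset.sum_subset hsub ?_).symm).trans ?_
      · intro x hx hnx
        rw [Finset.HasAntidiagonal.mem_antidiagonal] at hx
        simp only [Finset.mem_insert, Finset.mem_singleton, not_or, Prod.ext_iff] at hnx
        rcases Nat.lt_or_ge k x.1 with h1 | h1
        · rw [tp_coeff_gt k η a h1, zero_mul]
        rcases Nat.lt_or_ge k x.2 with h2 | h2
        · rw [tp_coeff_gt k η c h2, mul_zero]
        exact absurd rfl (by omega : ¬ x.1 = x.1)
      · rw [Finset.sum_insert (by simp only [Finset.mem_singleton, Prod.ext_iff]; omega),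
          Finset.sum_singleton, tp_coeff_lt k η a (by omega), tp_coeff_k,
          tp_coeff_k, tp_coeff_lt k η c (by omega)]
    have hco2 : (tp k η a * tp k η c).coeff n
        = (η * a (k-1)) * (η * c (k-1)) := by
      rw [Polynomial.coeff_mul]
      have hsub : ({(k, k)} : Finset (ℕ × ℕ)) ⊆ Finset.HasAntidiagonal.antidiagonal n := by
        intro x hx
        simp only [Finset.mem_singleton] at hx
        subst hx
        rw [Finset.HasAntidiagonal.mem_antidiagonal]; omega
      refine ((Finset.sum_subset hsub ?_).symm).trans ?_
      · intro x hx hnx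
        rw [Finset.HasAntidiagonal.mem_antidiagonal] at hx
        simp only [Finset.mem_singleton, Prod.ext_iff, not_and] at hnx
        rcases Nat.lt_or_ge k x.1 with h1 | h1
        · rw [tp_coeff_gt k η a h1, zero_mul]
        rcases Nat.lt_or_ge k x.2 with h2 | h2
        · rw [tp_coeff_gt k η c h2, mul_zero]
        exact absurd rfl (by omega : ¬ x.1 = x.1)
      · rw [Finset.sum_singleton, tp_coeff_k, tp_coeff_k]
    have hdeg : (tp k η a * tp k η c).natDegree ≤ n := by
      refine le_trans (Polynomial.natDegree_mul_le) ?_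
      have h1 := tp_natDegree_le k η a
      have h2 := tp_natDegree_le k η c
      omega
    have hkey := key_eval _ hdeg
    calc ∑ i, (v i * (tp k η a).eval (A i)) * (v i * (tp k η c).eval (A i))
        = ∑ i, v i ^ 2 * (tp k η a * tp k η c).eval (A i) := by
          refine Finset.sum_congr rfl fun i _ => ?_
          rw [Polynomial.eval_mul]; ring
      _ = (tp k η a * tp k η c).coeff (n-1) - B * (tp k η a * tp k η c).coeff n := hkey
      _ = 0 := by
          rw [hco1, hco2, hηdef]
          field_simp
          ring
  -- membership description
  have hmem : ∀ x : Fin n → F,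
      x ∈ C ↔ ∃ a : ℕ → F, x = fun i => v i * (tp k η a).eval (A i) := by
    intro x
    simp only [hCdef, TGRSCode, Set.mem_setOf_eq, tp_eval]
  -- zero codeword iff zero polynomial
  have hzero_poly : ∀ a : ℕ → F,
      (fun i => v i * (tp k η a).eval (A i)) = 0 → tp k η a = 0 := by
    intro a h
    refine Polynomial.eq_zero_of_natDegree_lt_card_of_eval_eq_zero (tp k η a) hAinj
      (fun i => ?_) ?_
    · have := congrFun h i
      simp only [Pi.zero_apply] at this
      exact (mul_eq_zero.mp this).resolve_left (hv0 i)
    · rw [Fintype.card_fin]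
      exact lt_of_le_of_lt (tp_natDegree_le k η a) hkn
  -- self-duality
  have hsd : IsSelfDual C := by
    set g : Fin k → (Fin n → F) := fun j i =>
      v i * ((A i)^(j:ℕ) + if (j:ℕ) = k-1 then η * A i ^ k else 0) with hgdef
    have hgsum : ∀ a : ℕ → F,
        (fun i => v i * (tp k η a).eval (A i)) = ∑ j : Fin k, a (j:ℕ) • g j := by
      intro a
      funext i
      symm
      rw [Finset.sum_apply]
      simp only [Pi.smul_apply, smul_eq_mul, hgdef]
      rw [← Finset.sum_range
        (fun j => a j * (v i * (A i ^ j + if j = k-1 then η * A i ^ k else 0)))]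
      rw [Finset.sum_congr rfl (fun j _ => by
        split <;> ring :
        ∀ j ∈ Finset.range k, a j * (v i * (A i ^ j + if j = k-1 then η * A i ^ k else 0))
          = a j * (v i * A i ^ j) + (if j = k-1 then a j * (v i * (η * A i ^ k)) else 0)),
        Finset.sum_add_distrib,
        Finset.sum_ite_eq' (Finset.range k) (k-1) (fun j => a j * (v i * (η * A i ^ k))),
        if_pos (Finset.mem_range.mpr (by omega))]
      rw [tp_eval, mul_add, Finset.mul_sum]
      congr 1
      · exact Finset.sum_congr rfl fun j _ => by ring
      · ring
    set M : Submodule F (Fin n → F) := Submodule.span F (Set.range g) with hMdef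
    have hCM : C = ↑M := by
      ext x
      rw [hmem x, SetLike.mem_coe, hMdef, Submodule.mem_span_range_iff_exists_fun]
      constructor
      · rintro ⟨a, rfl⟩
        exact ⟨fun j => a (j:ℕ), (hgsum a).symm⟩
      · rintro ⟨cf, rfl⟩
        refine ⟨fun m => if h : m < k then cf ⟨m, h⟩ else 0, ?_⟩
        rw [hgsum]
        exact (Finset.sum_congr rfl fun j _ => by rw [dif_pos j.isLt, Fin.eta]).symm
    have hLI : LinearIndependent F g := by
      rw [Fintype.linearIndependent_iff]
      intro cf hcf j
      set a : ℕ → F := fun m => if h : m < k then cf ⟨m, h⟩ else 0 with hadef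
      have hga : ∑ j : Fin k, cf j • g j = ∑ j : Fin k, a (j:ℕ) • g j :=
        Finset.sum_congr rfl fun j _ => by
          simp only [hadef]
          rw [dif_pos j.isLt, Fin.eta]
      have h0 : tp k η a = 0 := hzero_poly a (by rw [hgsum a, ← hga, hcf])
      have hja : a (j:ℕ) = 0 := by
        rw [← tp_coeff_lt k η a j.isLt, h0, Polynomial.coeff_zero]
      have haj : a (j:ℕ) = cf j := by
        simp only [hadef]
        rw [dif_pos j.isLt, Fin.eta]
      rwa [haj] at hja
    have hrank : Module.finrank F M = k := by
      rw [hMdef, finrank_span_eq_card hLI, Fintype.card_fin]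
    set Bf : LinearMap.BilinForm F (Fin n → F) := LinearMap.mk₂ F (fun x y => ∑ i, x i * y i)
      (fun x x' y => by
        simp only [Pi.add_apply, add_mul]
        rw [Finset.sum_add_distrib])
      (fun cc x y => by
        simp only [Pi.smul_apply, smul_eq_mul, Finset.mul_sum]
        exact Finset.sum_congr rfl fun i _ => by ring)
      (fun x y y' => by
        simp only [Pi.add_apply, mul_add]
        rw [Finset.sum_add_distrib])
      (fun cc x y => by
        simp only [Pi.smul_apply, smul_eq_mul, Finset.mul_sum]
        exact Finset.sum_congr rfl fun i _ => by ring) with hBfdef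
    have hBfapp : ∀ x y : Fin n → F, Bf x y = ∑ i, x i * y i := fun x y => rfl
    have hrefl : Bf.IsRefl := by
      intro x y h
      rw [hBfapp] at h ⊢
      rw [Finset.sum_congr rfl fun i _ => mul_comm (y i) (x i)]
      exact h
    have hnd : Bf.Nondegenerate := by
      refine (LinearMap.IsRefl.nondegenerate_iff_separatingLeft hrefl).mpr ?_
      intro x hx
      funext i
      have hxi := hx (Pi.single i (1:F))
      rw [hBfapp] at hxi
      have h2 : ∑ j, x j * (Pi.single i (1:F) : Fin n → F) j = x i := by
        rw [Finset.sum_eq_single i]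
        · simp
        · intro j _ hji
          simp [Pi.single_apply, hji]
        · simp
      rw [h2] at hxi
      simpa using hxi
    have hMorth : M ≤ Bf.orthogonal M := by
      intro x hx
      rw [LinearMap.BilinForm.mem_orthogonal_iff]
      intro y hy
      rw [hBfapp]
      have hxC : x ∈ C := by rw [hCM]; exact hx
      have hyC : y ∈ C := by rw [hCM]; exact hy
      obtain ⟨a, rfl⟩ := (hmem x).mp hxC
      obtain ⟨c, rfl⟩ := (hmem y).mp hyC
      exact horth c a
    have hfr : Module.finrank F (Fin n → F) = n := by
      simp [Module.finrank_pi]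
    have hoeq : Module.finrank F (Bf.orthogonal M) = n - k := by
      rw [LinearMap.BilinForm.finrank_orthogonal hnd M, hrank, hfr]
    have hMeq : M = Bf.orthogonal M :=
      Submodule.eq_of_le_of_finrank_le hMorth (by rw [hoeq, hrank]; omega)
    rw [IsSelfDual]
    have hdc : dualCode C = ↑(Bf.orthogonal M) := by
      ext x
      simp only [dualCode, Set.mem_setOf_eq, SetLike.mem_coe,
        LinearMap.BilinForm.mem_orthogonal_iff]
      constructor
      · intro h y hy
        rw [hBfapp,
          Finset.sum_congr rfl fun i _ => mul_comm (y i) (x i)]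
        exact h y (by rw [hCM]; exact SetLike.mem_coe.mpr hy)
      · intro h c hc
        have hcx := h c (by rw [hCM] at hc; exact SetLike.mem_coe.mp hc)
        rw [hBfapp] at hcx
        rw [Finset.sum_congr rfl fun i _ => mul_comm (x i) (c i)]
        exact hcx
    rw [hdc, ← hMeq, hCM]
  -- weight formula
  have hwt_eq : ∀ P : F[X], hwt (fun i => v i * P.eval (A i))
      = n - (Finset.univ.filter (fun i => P.eval (A i) = 0)).card := by
    intro P
    have hset : {i | (fun i => v i * P.eval (A i)) i ≠ 0}
        = ↑(Finset.univ.filter (fun i => ¬ P.eval (A i) = 0)) := by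
      ext i
      simp only [Set.mem_setOf_eq, Finset.coe_filter, Finset.mem_univ, true_and, ne_eq,
        mul_eq_zero, not_or]
      exact ⟨fun h => h.2, fun h => ⟨hv0 i, h⟩⟩
    simp only [hwt]
    rw [hset, Set.ncard_coe_finset]
    have hfc := Finset.card_filter_add_card_filter_not
      (s := (Finset.univ : Finset (Fin n))) (p := fun i => P.eval (A i) = 0)
    rw [Finset.card_univ, Fintype.card_fin] at hfc
    omega
  have hZcard : ∀ (P : F[X]) (d : ℕ), P ≠ 0 → P.natDegree ≤ d →
      (Finset.univ.filter (fun i => P.eval (A i) = 0)).card ≤ d := by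
    intro P d hP hdeg
    have h1 : (Finset.univ.filter (fun i => P.eval (A i) = 0)).card
        = ((Finset.univ.filter (fun i => P.eval (A i) = 0)).image A).card :=
      (Finset.card_image_of_injOn (hAinj.injOn)).symm
    rw [h1]
    have h2 : ((Finset.univ.filter (fun i => P.eval (A i) = 0)).image A)
        ⊆ P.roots.toFinset := by
      intro x hx
      simp only [Finset.mem_image, Finset.mem_filter, Finset.mem_univ, true_and] at hx
      obtain ⟨i, hi, rfl⟩ := hx
      rw [Multiset.mem_toFinset, Polynomial.mem_roots hP]
      exact hi
    calc _ ≤ P.roots.toFinset.card := Finset.card_le_card h2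
      _ ≤ Multiset.card P.roots := P.roots.toFinset_card_le
      _ ≤ P.natDegree := P.card_roots'
      _ ≤ d := hdeg
  -- codewords of weight n - k give special subsets
  have hsum_of_k : ∀ P : F[X], P ≠ 0 → P.natDegree ≤ k →
      P.coeff k = η * P.coeff (k-1) →
      (Finset.univ.filter (fun i => P.eval (A i) = 0)).card = k →
      ∑ i ∈ Finset.univ.filter (fun i => P.eval (A i) = 0), α i = -b/2 := by
    intro P hPne hPdeg hPrel hcard
    set Z := Finset.univ.filter (fun i => P.eval (A i) = 0) with hZdef
    have hck : P.coeff (k-1) ≠ 0 := by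
      intro h0
      have hdeg' : P.natDegree ≤ k - 1 := by
        rw [Polynomial.natDegree_le_iff_coeff_eq_zero]
        intro m hm
        rcases Nat.lt_or_ge k m with h | h
        · exact Polynomial.coeff_eq_zero_of_natDegree_lt (by omega)
        · have hmk : m = k := by omega
          subst hmk
          rw [hPrel, h0, mul_zero]
      have hzc := hZcard P (k-1) hPne hdeg'
      rw [← hZdef] at hzc
      omega
    set Q : F[X] := Lagrange.nodal Z A with hQdef
    have hQdeg : Q.natDegree = k := by rw [hQdef, Lagrange.natDegree_nodal, hcard]
    have hQco : Q.coeff k = 1 := by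
      have hmono : Q.Monic := Lagrange.nodal_monic
      rw [← hQdeg]
      exact hmono.coeff_natDegree
    have hfact : P = Polynomial.C (P.coeff k) * Q := by
      have hdiff : (P - Polynomial.C (P.coeff k) * Q) = 0 := by
        apply Polynomial.eq_zero_of_natDegree_lt_card_of_eval_eq_zero'
          _ (Z.image A)
        · intro x hx
          obtain ⟨i, hi, rfl⟩ := Finset.mem_image.mp hx
          have h1 : P.eval (A i) = 0 := (Finset.mem_filter.mp hi).2
          have h2 : Q.eval (A i) = 0 := Lagrange.eval_nodal_at_node hi
          rw [Polynomial.eval_sub, Polynomial.eval_mul, h1, h2, mul_zero, sub_zero]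
        · rw [Finset.card_image_of_injOn hAinj.injOn, hcard]
          have hd : (P - Polynomial.C (P.coeff k) * Q).natDegree ≤ k - 1 := by
            rw [Polynomial.natDegree_le_iff_coeff_eq_zero]
            intro m hm
            rw [Polynomial.coeff_sub, Polynomial.coeff_C_mul]
            rcases Nat.lt_or_ge k m with h | h
            · have e1 : P.coeff m = 0 :=
                Polynomial.coeff_eq_zero_of_natDegree_lt (lt_of_le_of_lt hPdeg h)
              have e2 : Q.coeff m = 0 :=
                Polynomial.coeff_eq_zero_of_natDegree_lt (by rw [hQdeg]; omega)
              rw [e1, e2]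
              ring
            · have hmk : m = k := by omega
              subst hmk
              rw [hQco, mul_one, sub_self]
          omega
      have := sub_eq_zero.mp hdiff
      exact this
    have hco := congrArg (fun R => Polynomial.coeff R (k-1)) hfact
    simp only [Polynomial.coeff_C_mul] at hco
    have hnodc : Q.coeff (k-1) = -∑ i ∈ Z, A i := by
      have h1 : Q.nextCoeff = -∑ i ∈ Z, A i := by
        rw [hQdef, Lagrange.nodal]
        exact Polynomial.prod_X_sub_C_nextCoeff A
      rw [← h1, Polynomial.nextCoeff_of_natDegree_pos (by omega), hQdeg]
    rw [hnodc, hPrel] at hco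
    -- hco : P.coeff (k-1) = η * P.coeff (k-1) * -∑ A
    have hs : η * (∑ i ∈ Z, A i) = -1 := by
      have h2 : P.coeff (k-1) * (1 + η * ∑ i ∈ Z, A i) = 0 := by linear_combination hco
      rcases mul_eq_zero.mp h2 with h | h
      · exact absurd h hck
      · linear_combination h
    apply hinj
    rw [map_sum]
    have hAs : ∑ i ∈ Z, A i = ∑ x ∈ Z, algebraMap Fq F (α x) :=
      Finset.sum_congr rfl (fun i _ => by rw [hAdef])
    rw [← hAs]
    have hmap2 : algebraMap Fq F (-b/2) = -(B/2) := by
      rw [map_div₀, map_neg, map_ofNat, hBdef, neg_div]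
    rw [hmap2]
    have hη2 : (∑ i ∈ Z, A i) = -η⁻¹ := by
      have h2 : η * (-η⁻¹) = -1 := by rw [mul_neg, mul_inv_cancel₀ hη0]
      exact mul_left_cancel₀ hη0 (hs.trans h2.symm)
    rw [hη2, hηdef, mul_inv, inv_inv]
    ring
  -- lower bound for all nonzero codewords
  have hlow : ∀ x ∈ C, x ≠ 0 → n - k ≤ hwt x := by
    intro x hx hx0
    obtain ⟨a, rfl⟩ := (hmem x).mp hx
    have hane : tp k η a ≠ 0 := fun h => hx0 (by funext i; rw [h]; simp)
    rw [hwt_eq]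
    have := hZcard (tp k η a) k hane (tp_natDegree_le k η a)
    omega
  have hwt0 : hwt (0 : Fin n → F) = 0 := by
    simp [hwt]
  constructor
  · -- MDS case
    intro hI
    refine ⟨hsd, ?_, ?_⟩
    · -- existence of a codeword of weight k+1
      obtain ⟨J, hJsub, hJcard⟩ := Finset.exists_subset_card_eq (s := (Finset.univ : Finset (Fin n)))
        (n := k-1) (by rw [Finset.card_univ, Fintype.card_fin]; omega)
      set gJ : F[X] := Lagrange.nodal J A with hgJ
      have hgJdeg : gJ.natDegree = k - 1 := by rw [hgJ, Lagrange.natDegree_nodal, hJcard]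
      set tt : F := η⁻¹ - gJ.coeff (k-2) with htt
      set P : F[X] := (X + Polynomial.C tt) * gJ with hPdef
      have hPmonic : P.Monic := (Polynomial.monic_X_add_C tt).mul Lagrange.nodal_monic
      have hPdeg : P.natDegree = k := by
        rw [hPdef, Polynomial.natDegree_mul (Polynomial.X_add_C_ne_zero tt)
          Lagrange.nodal_ne_zero, Polynomial.natDegree_X_add_C, hgJdeg]
        omega
      have hPk : P.coeff k = 1 := by
        rw [← hPdeg]
        exact hPmonic.coeff_natDegree
      have hgJlead : gJ.coeff (k-1) = 1 := by
        rw [← hgJdeg]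
        exact Lagrange.nodal_monic.coeff_natDegree
      have hPk1 : P.coeff (k-1) = η⁻¹ := by
        have hexp : P = X * gJ + Polynomial.C tt * gJ := by rw [hPdef]; ring
        have h1 : (X * gJ).coeff (k-1) = gJ.coeff (k-2) := by
          rw [show k - 1 = (k-2) + 1 by omega, Polynomial.coeff_X_mul]
        have h2 : (Polynomial.C tt * gJ).coeff (k-1) = tt := by
          rw [Polynomial.coeff_C_mul, hgJlead, mul_one]
        rw [hexp, Polynomial.coeff_add, h1, h2, htt]
        ring
      have hPrel : P.coeff k = η * P.coeff (k-1) := by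
        rw [hPk, hPk1, mul_inv_cancel₀ hη0]
      have htpP : tp k η (fun j => P.coeff j) = P :=
        tp_of_poly k η P (le_of_eq hPdeg) hPrel
      have hPne : P ≠ 0 := hPmonic.ne_zero
      have hZJ : J ⊆ Finset.univ.filter (fun i => P.eval (A i) = 0) := by
        intro i hi
        rw [Finset.mem_filter]
        refine ⟨Finset.mem_univ i, ?_⟩
        rw [hPdef, Polynomial.eval_mul, hgJ, Lagrange.eval_nodal_at_node hi, mul_zero]
      have hZle := hZcard P k hPne (le_of_eq hPdeg)
      have hZne : (Finset.univ.filter (fun i => P.eval (A i) = 0)).card ≠ k := by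
        intro hceq
        exact hI _ hceq (hsum_of_k P hPne (le_of_eq hPdeg) hPrel hceq)
      have hZeq : Finset.univ.filter (fun i => P.eval (A i) = 0) = J := by
        symm
        apply Finset.eq_of_subset_of_card_le hZJ
        rw [hJcard]
        omega
      have hhw : hwt (fun i => v i * P.eval (A i)) = n - (k-1) := by
        rw [hwt_eq, hZeq, hJcard]
      refine ⟨fun i => v i * P.eval (A i), ?_, ?_, ?_⟩
      · rw [hmem]
        exact ⟨fun j => P.coeff j, by rw [htpP]⟩
      · intro h0
        rw [h0, hwt0] at hhw
        omega
      · rw [hhw]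
        omega
    · -- all nonzero codewords have weight ≥ k+1
      intro x hx hx0
      obtain ⟨a, rfl⟩ := (hmem x).mp hx
      have hane : tp k η a ≠ 0 := fun h => hx0 (by funext i; rw [h]; simp)
      rw [hwt_eq]
      have hle := hZcard (tp k η a) k hane (tp_natDegree_le k η a)
      have hne : (Finset.univ.filter (fun i => (tp k η a).eval (A i) = 0)).card ≠ k := by
        intro hceq
        refine hI _ hceq (hsum_of_k (tp k η a) hane (tp_natDegree_le k η a) ?_ hceq)
        rw [tp_coeff_k, tp_coeff_lt k η a (by omega)]
      omega
  · -- NMDS case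
    rintro ⟨I, hIcard, hIsum⟩
    have hmain : IsMinDist C (n - k) := by
      constructor
      · -- a codeword of weight exactly n - k
        set P : F[X] := Polynomial.C η * Lagrange.nodal I A with hPdef
        have hnodeg : (Lagrange.nodal I A).natDegree = k := by
          rw [Lagrange.natDegree_nodal, hIcard]
        have hPdeg : P.natDegree = k := by
          rw [hPdef, Polynomial.natDegree_C_mul hη0, hnodeg]
        have hPne : P ≠ 0 := by
          rw [hPdef]
          exact mul_ne_zero (by simpa using hη0) Lagrange.nodal_ne_zero
        have hsumI : ∑ i ∈ I, A i = -(B/2) := by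
          have : algebraMap Fq F (∑ i ∈ I, α i) = algebraMap Fq F (-b/2) := by rw [hIsum]
          rw [map_sum, map_div₀, map_neg, map_ofNat, neg_div] at this
          rw [← hBdef] at this
          refine (Finset.sum_congr rfl fun i _ => by rw [hAdef]).trans this
        have hnoco : (Lagrange.nodal I A).coeff (k-1) = B/2 := by
          have h1 : (Lagrange.nodal I A).nextCoeff = -∑ i ∈ I, A i := by
            rw [Lagrange.nodal]
            exact Polynomial.prod_X_sub_C_nextCoeff A
          rw [Polynomial.nextCoeff_of_natDegree_pos (by omega), hnodeg] at h1
          rw [h1, hsumI, neg_neg]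
        have hPk : P.coeff k = η := by
          rw [hPdef, Polynomial.coeff_C_mul, ← hnodeg, Lagrange.nodal_monic.coeff_natDegree,
            mul_one]
        have hPk1 : P.coeff (k-1) = 1 := by
          rw [hPdef, Polynomial.coeff_C_mul, hnoco, hηdef]
          field_simp
        have hPrel : P.coeff k = η * P.coeff (k-1) := by rw [hPk, hPk1, mul_one]
        have htpP : tp k η (fun j => P.coeff j) = P :=
          tp_of_poly k η P (le_of_eq hPdeg) hPrel
        have hZI : I ⊆ Finset.univ.filter (fun i => P.eval (A i) = 0) := by
          intro i hi
          rw [Finset.mem_filter]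
          refine ⟨Finset.mem_univ i, ?_⟩
          rw [hPdef, Polynomial.eval_mul, Lagrange.eval_nodal_at_node hi, mul_zero]
        have hZle := hZcard P k hPne (le_of_eq hPdeg)
        have hZeq : Finset.univ.filter (fun i => P.eval (A i) = 0) = I := by
          symm
          apply Finset.eq_of_subset_of_card_le hZI
          rw [hIcard]
          omega
        have hhw : hwt (fun i => v i * P.eval (A i)) = n - k := by
          rw [hwt_eq, hZeq, hIcard]
        refine ⟨fun i => v i * P.eval (A i), ?_, ?_, ?_⟩
        · rw [hmem]
          exact ⟨fun j => P.coeff j, by rw [htpP]⟩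
        · intro h0
          rw [h0, hwt0] at hhw
          omega
        · exact hhw
      · exact hlow
    refine ⟨hsd, hmain, ?_⟩
    have hdual : dualCode C = C := hsd.symm
    have h' : n - k = k := by omega
    rw [hdual, ← h']
    exact hmain
end
end

section
/- In the setting where q is an odd prime power, n ≥ 6 an even integer with (n+1) | (q−1), β ∈ F_q\{0}, m(x) = (x^{n+1} − β^{n+1})/(x − β) has roots α_1,…,α_n in F_q, v_i ∈ F_{q²} satisfies v_i² = α_i(α_i − β), and η := 2β^{−1}: if Σ_{i∈I} α_i ≠ −β/2 for every subset I ⊆ {1,…,n} with |I| = n/2, then C_{n/2}(α,v,η) is a self-dual MDS code of length n over F_{q²}; otherwise C_{n/2}(α,v,η) is a self-dual NMDS code of length n over F_{q²}. -/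
open Finset Polynomial

noncomputable section

section AuxTGRS
open Module


lemma roots_card_le {K : Type*} [Field K] {f : K[X]} (hf : f ≠ 0) {s : Finset K}
    (hroots : ∀ x ∈ s, f.eval x = 0) : s.card ≤ f.natDegree := by
  classical
  have hsub : s ⊆ f.roots.toFinset := by
    intro x hx
    rw [Multiset.mem_toFinset, mem_roots hf]
    exact hroots x hx
  exact le_trans (Finset.card_le_card hsub)
    (le_trans (Multiset.toFinset_card_le f.roots) (Polynomial.card_roots' f))

lemma poly_eq_zero_of_roots {K : Type*} [Field K] {f : K[X]} {s : Finset K}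
    (hroots : ∀ x ∈ s, f.eval x = 0) (hdeg : f.natDegree < s.card) : f = 0 := by
  by_contra hf
  exact absurd (roots_card_le hf hroots) (by omega)

lemma sum_pow_roots_of_unity {K : Type*} [Field K] {T : Finset K} {m j : ℕ}
    (hT : ∀ t ∈ T, t ^ m = 1) (hcard : T.card = m) (hj0 : 0 < j) (hjm : j < m) :
    ∑ t ∈ T, t ^ j = 0 := by
  classical
  have hm : 0 < m := lt_of_le_of_lt (Nat.zero_le _) hjm
  have hpm : (X ^ m - 1 : K[X]) ≠ 0 := by
    simpa using Polynomial.X_pow_sub_C_ne_zero hm (1 : K)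
  have hmemT : ∀ x : K, x ^ m = 1 → x ∈ T := by
    intro x hx
    have hsub : T ⊆ (X ^ m - 1 : K[X]).roots.toFinset := by
      intro t ht
      rw [Multiset.mem_toFinset, mem_roots hpm]
      simp [IsRoot, hT t ht]
    have hcle : (X ^ m - 1 : K[X]).roots.toFinset.card ≤ m := by
      refine le_trans (Multiset.toFinset_card_le _) ?_
      refine le_trans (Polynomial.card_roots' _) ?_
      simp [(by simpa using @Polynomial.natDegree_X_pow_sub_C K _ _ m 1 : (X ^ m - 1 : K[X]).natDegree = m)]
    have hTe : T = (X ^ m - 1 : K[X]).roots.toFinset :=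
      Finset.eq_of_subset_of_card_le hsub (by omega)
    rw [hTe, Multiset.mem_toFinset, mem_roots hpm]
    simp [IsRoot, hx]
  have hexists : ∃ h ∈ T, h ^ j ≠ 1 := by
    by_contra hcon
    push_neg at hcon
    have hpj : (X ^ j - 1 : K[X]) ≠ 0 := by
      simpa using Polynomial.X_pow_sub_C_ne_zero hj0 (1 : K)
    have h1 := roots_card_le hpj (s := T) (by intro t ht; simp [hcon t ht])
    rw [hcard] at h1
    have h2 : (X ^ j - 1 : K[X]).natDegree = j := by
      simpa using @Polynomial.natDegree_X_pow_sub_C K _ _ j 1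
    omega
  obtain ⟨h, hhT, hhj⟩ := hexists
  have hh0 : h ≠ 0 := by
    intro h0
    have := hT h hhT
    rw [h0, zero_pow hm.ne'] at this
    exact zero_ne_one this
  have hbij : ∑ t ∈ T, t ^ j = ∑ t ∈ T, (h * t) ^ j := by
    refine (Finset.sum_nbij' (fun t => h * t) (fun t => h⁻¹ * t) ?_ ?_ ?_ ?_ ?_).symm
    · intro t ht
      exact hmemT _ (by rw [mul_pow, hT t ht, hT h hhT, one_mul])
    · intro t ht
      refine hmemT _ ?_
      rw [mul_pow, hT t ht, inv_pow, hT h hhT, inv_one, one_mul]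
    · intro t _; simp [inv_mul_cancel_left₀ hh0]
    · intro t _; simp [mul_inv_cancel_left₀ hh0]
    · intro t _; rfl
  have hkey : (1 - h ^ j) * ∑ t ∈ T, t ^ j = 0 := by
    rw [sub_mul, one_mul, Finset.mul_sum, hbij]
    simp [mul_pow, sub_eq_zero]
  rcases mul_eq_zero.mp hkey with h1 | h2
  · exact absurd (by linear_combination -h1) hhj
  · exact h2

def tgrsPoly {K : Type*} [Field K] (k : ℕ) (η : K) (a : ℕ → K) : K[X] :=
  (∑ j ∈ Finset.range k, C (a j) * X ^ j) + C (η * a (k - 1)) * X ^ k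

lemma tgrsPoly_eval {K : Type*} [Field K] (k : ℕ) (η : K) (a : ℕ → K) (x : K) :
    (tgrsPoly k η a).eval x
      = (∑ j ∈ Finset.range k, a j * x ^ j) + η * a (k - 1) * x ^ k := by
  simp [tgrsPoly, eval_finset_sum]

lemma tgrsPoly_coeff {K : Type*} [Field K] (k : ℕ) (η : K) (a : ℕ → K) (m : ℕ) :
    (tgrsPoly k η a).coeff m
      = if m < k then a m else if m = k then η * a (k - 1) else 0 := by
  classical
  simp only [tgrsPoly, coeff_add, finset_sum_coeff, coeff_C_mul, coeff_X_pow,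
    mul_ite, mul_one, mul_zero, Finset.sum_ite_eq, Finset.mem_range]
  by_cases h1 : m < k
  · rw [if_pos h1, if_neg (by omega : ¬ m = k), add_zero, if_pos h1]
  · by_cases h2 : m = k <;> simp [h1, h2]

lemma tgrsPoly_natDegree_le {K : Type*} [Field K] (k : ℕ) (η : K) (a : ℕ → K) :
    (tgrsPoly k η a).natDegree ≤ k := by
  rw [Polynomial.natDegree_le_iff_coeff_eq_zero]
  intro m hm
  rw [tgrsPoly_coeff, if_neg (by omega), if_neg (by omega)]

lemma hwt_formula {K : Type*} [Field K] [DecidableEq K] {n : ℕ} {v : Fin n → K} (hv : ∀ i, v i ≠ 0)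
    (w : Fin n → K) :
    {i | v i * w i ≠ 0}.ncard = n - (Finset.univ.filter fun i => w i = 0).card := by
  have hset : {i | v i * w i ≠ 0}
      = ↑(Finset.univ.filter fun i => ¬ (w i = 0)) := by
    ext i
    simp [hv i]
  rw [hset, Set.ncard_coe_finset, Finset.filter_not, Finset.card_sdiff_of_subset (Finset.filter_subset _ _),
    Finset.card_univ, Fintype.card_fin]

lemma mem_tgrs_iff {K : Type*} [Field K] {n k : ℕ} (hk : 0 < k) (A v : Fin n → K)
    (η : K) (c : Fin n → K) :
    c ∈ TGRSCode K n k A v η ↔ ∃ f : K[X], f.natDegree ≤ k ∧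
      f.coeff k = η * f.coeff (k - 1) ∧ c = fun i => v i * f.eval (A i) := by
  constructor
  · rintro ⟨a, rfl⟩
    refine ⟨tgrsPoly k η a, tgrsPoly_natDegree_le k η a, ?_, ?_⟩
    · rw [tgrsPoly_coeff, tgrsPoly_coeff, if_neg (lt_irrefl k), if_pos rfl, if_pos (by omega)]
    · funext i; rw [tgrsPoly_eval]
  · rintro ⟨f, hdeg, hcoeff, rfl⟩
    refine ⟨fun j => f.coeff j, ?_⟩
    funext i
    rw [Polynomial.eval_eq_sum_range' (Nat.lt_succ_of_le hdeg), Finset.sum_range_succ, hcoeff]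

lemma natDegree_le_of_coeff_zero {K : Type*} [Field K] {k : ℕ} {η : K} {f : K[X]}
    (hdeg : f.natDegree ≤ k) (hcoeff : f.coeff k = η * f.coeff (k - 1))
    (hz : f.coeff (k - 1) = 0) (hk : 2 ≤ k) : f.natDegree ≤ k - 2 := by
  rw [Polynomial.natDegree_le_iff_coeff_eq_zero]
  intro m hm
  rcases lt_trichotomy m k with h | h | h
  · have : m = k - 1 := by omega
    rw [this, hz]
  · rw [h, hcoeff, hz, mul_zero]
  · exact Polynomial.coeff_eq_zero_of_natDegree_lt (by omega)

-- dot product bilinear form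
def dotForm (K : Type*) [Field K] (n : ℕ) : LinearMap.BilinForm K (Fin n → K) :=
  LinearMap.mk₂ K (fun x y => ∑ i, x i * y i)
    (fun x x' y => by simp [add_mul, Finset.sum_add_distrib])
    (fun c x y => by simp [Finset.mul_sum, mul_assoc])
    (fun x y y' => by simp [mul_add, Finset.sum_add_distrib])
    (fun c x y => by simp [Finset.mul_sum, mul_assoc, mul_left_comm])

lemma dotForm_apply {K : Type*} [Field K] {n : ℕ} (x y : Fin n → K) :
    dotForm K n x y = ∑ i, x i * y i := rfl

lemma dotForm_refl {K : Type*} [Field K] {n : ℕ} : (dotForm K n).IsRefl := by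
  intro x y h
  rw [dotForm_apply] at *
  rw [← h]
  exact Finset.sum_congr rfl fun i _ => mul_comm _ _

lemma dotForm_nondeg {K : Type*} [Field K] {n : ℕ} : (dotForm K n).Nondegenerate := by
  refine LinearMap.BilinForm.Nondegenerate.ofSeparatingLeft ?_
  intro x hx
  funext i
  have := hx (Pi.single i 1)
  rw [dotForm_apply] at this
  simpa [Pi.single_apply, Finset.sum_ite_eq'] using this

-- orthogonality of two codewords
lemma tgrs_orth {K : Type*} [Field K] {n k : ℕ} (hkn : n = k + k) (hk : 3 ≤ k)
    {A v : Fin n → K} {b : K} (hb : b ≠ 0) {D : K}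
    (hW0 : ∀ m ≤ n - 2, ∑ i, v i ^ 2 * A i ^ m = 0)
    (hW1 : ∑ i, v i ^ 2 * A i ^ (n - 1) = D)
    (hW2 : ∑ i, v i ^ 2 * A i ^ n = -(D * b))
    {f g : K[X]} (hf : f.natDegree ≤ k) (hg : g.natDegree ≤ k)
    (hfc : f.coeff k = (2 * b⁻¹) * f.coeff (k - 1))
    (hgc : g.coeff k = (2 * b⁻¹) * g.coeff (k - 1)) :
    ∑ i, (v i * f.eval (A i)) * (v i * g.eval (A i)) = 0 := by
  classical
  set η : K := 2 * b⁻¹ with hη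
  have key : ∑ i, (v i * f.eval (A i)) * (v i * g.eval (A i))
      = ∑ j ∈ Finset.range (k+1), ∑ l ∈ Finset.range (k+1),
          f.coeff j * g.coeff l * ∑ i, v i ^ 2 * A i ^ (j + l) := by
    have expand : ∀ i, (v i * f.eval (A i)) * (v i * g.eval (A i))
        = ∑ j ∈ Finset.range (k+1), ∑ l ∈ Finset.range (k+1),
            f.coeff j * g.coeff l * (v i ^ 2 * A i ^ (j + l)) := by
      intro i
      rw [Polynomial.eval_eq_sum_range' (Nat.lt_succ_of_le hf),
        Polynomial.eval_eq_sum_range' (Nat.lt_succ_of_le hg)]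
      calc (v i * ∑ j ∈ Finset.range (k+1), f.coeff j * A i ^ j) *
          (v i * ∑ l ∈ Finset.range (k+1), g.coeff l * A i ^ l)
          = ((∑ j ∈ Finset.range (k+1), f.coeff j * A i ^ j) *
              (∑ l ∈ Finset.range (k+1), g.coeff l * A i ^ l)) * v i ^ 2 := by ring
        _ = (∑ j ∈ Finset.range (k+1), ∑ l ∈ Finset.range (k+1),
              (f.coeff j * A i ^ j) * (g.coeff l * A i ^ l)) * v i ^ 2 := by
            rw [Finset.sum_mul_sum]
        _ = ∑ j ∈ Finset.range (k+1), ∑ l ∈ Finset.range (k+1),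
              f.coeff j * g.coeff l * (v i ^ 2 * A i ^ (j + l)) := by
            rw [Finset.sum_mul]
            refine Finset.sum_congr rfl fun j _ => ?_
            rw [Finset.sum_mul]
            refine Finset.sum_congr rfl fun l _ => ?_
            rw [pow_add]; ring
    calc ∑ i, (v i * f.eval (A i)) * (v i * g.eval (A i))
        = ∑ i, ∑ j ∈ Finset.range (k+1), ∑ l ∈ Finset.range (k+1),
            f.coeff j * g.coeff l * (v i ^ 2 * A i ^ (j + l)) :=
          Finset.sum_congr rfl fun i _ => expand i
      _ = ∑ j ∈ Finset.range (k+1), ∑ i, ∑ l ∈ Finset.range (k+1),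
            f.coeff j * g.coeff l * (v i ^ 2 * A i ^ (j + l)) := Finset.sum_comm
      _ = ∑ j ∈ Finset.range (k+1), ∑ l ∈ Finset.range (k+1), ∑ i,
            f.coeff j * g.coeff l * (v i ^ 2 * A i ^ (j + l)) :=
          Finset.sum_congr rfl fun j _ => Finset.sum_comm
      _ = ∑ j ∈ Finset.range (k+1), ∑ l ∈ Finset.range (k+1),
            f.coeff j * g.coeff l * ∑ i, v i ^ 2 * A i ^ (j + l) := by
          refine Finset.sum_congr rfl fun j _ => Finset.sum_congr rfl fun l _ => ?_
          rw [Finset.mul_sum]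
  obtain ⟨m, rfl⟩ : ∃ m, k = m + 1 := ⟨k - 1, by omega⟩
  rw [key]
  have hzero : ∀ j l : ℕ, j + l ≤ n - 2 →
      f.coeff j * g.coeff l * ∑ i, v i ^ 2 * A i ^ (j + l) = 0 := by
    intro j l hjl
    rw [hW0 _ hjl, mul_zero]
  rw [Finset.sum_range_succ, Finset.sum_range_succ]
  rw [Finset.sum_range_succ, Finset.sum_range_succ, Finset.sum_range_succ,
    Finset.sum_range_succ]
  rw [Finset.sum_eq_zero (fun j hj => by
    rw [Finset.sum_range_succ, Finset.sum_range_succ]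
    rw [Finset.sum_eq_zero (fun l hl => hzero j l (by
      simp only [Finset.mem_range] at hj hl; omega))]
    rw [hzero j m (by simp only [Finset.mem_range] at hj; omega),
      hzero j (m+1) (by simp only [Finset.mem_range] at hj; omega)]
    simp)]
  rw [Finset.sum_eq_zero (fun l hl => hzero m l (by
      simp only [Finset.mem_range] at hl; omega))]
  rw [Finset.sum_eq_zero (fun l hl => hzero (m+1) l (by
      simp only [Finset.mem_range] at hl; omega))]
  rw [hzero m m (by omega)]
  have e1 : m + (m + 1) = n - 1 := by omega
  have e2 : m + 1 + m = n - 1 := by omega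
  have e3 : m + 1 + (m + 1) = n := by omega
  rw [e1, e2, e3, hW1, hW2]
  have ek : m + 1 - 1 = m := by omega
  rw [ek] at hfc hgc
  rw [hfc, hgc]
  linear_combination (-(f.coeff m * g.coeff m * D * 4 * b⁻¹)) * mul_inv_cancel₀ hb

-- the generator matrix
def tgrsMatrix {K : Type*} [Field K] (n k : ℕ) (A v : Fin n → K) (η : K) :
    Matrix (Fin n) (Fin k) K :=
  fun i j => v i * ((A i) ^ (j : ℕ) + if (j : ℕ) = k - 1 then η * A i ^ k else 0)

lemma tgrsMatrix_mulVec {K : Type*} [Field K] {n k : ℕ} (hk : 0 < k)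
    (A v : Fin n → K) (η : K) (a : Fin k → K) (i : Fin n) :
    ((tgrsMatrix n k A v η).mulVec a) i
      = v i * ((∑ j ∈ Finset.range k, (if h : j < k then a ⟨j, h⟩ else 0) * A i ^ j)
          + η * (if h : k - 1 < k then a ⟨k - 1, h⟩ else 0) * A i ^ k) := by
  classical
  have hrange : ∀ (f : ℕ → K), ∑ j ∈ Finset.range k, f j = ∑ j : Fin k, f (j : ℕ) :=
    fun f => Finset.sum_range f
  rw [Matrix.mulVec, dotProduct, hrange, dif_pos (show k - 1 < k by omega)]
  simp only [Fin.is_lt, dif_pos, Fin.eta]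
  set j0 : Fin k := ⟨k - 1, by omega⟩ with hj0
  calc ∑ j : Fin k, tgrsMatrix n k A v η i j * a j
      = ∑ j : Fin k, (v i * (a j * A i ^ (j:ℕ))
          + if j = j0 then v i * (η * a j0 * A i ^ k) else 0) := by
        refine Finset.sum_congr rfl fun j _ => ?_
        rw [tgrsMatrix]
        by_cases h : j = j0
        · rw [if_pos (by rw [h]), if_pos h, h]; ring
        · rw [if_neg (fun hval => h (Fin.ext hval)), if_neg h]; ring
    _ = (∑ j : Fin k, v i * (a j * A i ^ (j:ℕ))) + v i * (η * a j0 * A i ^ k) := by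
        rw [Finset.sum_add_distrib, Finset.sum_ite_eq' Finset.univ j0]
        simp
    _ = v i * ((∑ j : Fin k, a j * A i ^ (j:ℕ)) + η * a j0 * A i ^ k) := by
        rw [mul_add, Finset.mul_sum]

lemma tgrs_eq_range {K : Type*} [Field K] {n k : ℕ} (hk : 0 < k) (A v : Fin n → K)
    (η : K) :
    TGRSCode K n k A v η
      = ↑(LinearMap.range (Matrix.mulVecLin (tgrsMatrix n k A v η))) := by
  classical
  ext c
  simp only [SetLike.mem_coe, LinearMap.mem_range, Matrix.mulVecLin_apply]
  constructor
  · rintro ⟨a, rfl⟩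
    refine ⟨fun j => a (j : ℕ), ?_⟩
    funext i
    rw [tgrsMatrix_mulVec hk]
    congr 2
    · refine Finset.sum_congr rfl fun j hj => ?_
      rw [dif_pos (Finset.mem_range.mp hj)]
    · rw [dif_pos (show k - 1 < k by omega)]
  · rintro ⟨a, rfl⟩
    exact ⟨fun j => if h : j < k then a ⟨j, h⟩ else 0,
      by funext i; rw [tgrsMatrix_mulVec hk]⟩

lemma tgrs_selfdual {K : Type*} [Field K] {n k : ℕ} (hkn : n = k + k) (hk : 3 ≤ k)
    {A v : Fin n → K} (hA : Function.Injective A) (hv : ∀ i, v i ≠ 0)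
    {b : K} (hb : b ≠ 0) {D : K}
    (hW0 : ∀ m ≤ n - 2, ∑ i, v i ^ 2 * A i ^ m = 0)
    (hW1 : ∑ i, v i ^ 2 * A i ^ (n - 1) = D)
    (hW2 : ∑ i, v i ^ 2 * A i ^ n = -(D * b)) :
    IsSelfDual (TGRSCode K n k A v (2 * b⁻¹)) := by
  classical
  set η : K := 2 * b⁻¹ with hη
  set L := Matrix.mulVecLin (tgrsMatrix n k A v η) with hL
  have hk0 : 0 < k := by omega
  have hrange := tgrs_eq_range (K := K) hk0 A v η
  have hinj : Function.Injective L := by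
    rw [← LinearMap.ker_eq_bot, LinearMap.ker_eq_bot']
    intro a ha
    set aN : ℕ → K := fun j => if h : j < k then a ⟨j, h⟩ else 0 with haN
    have hceq : ∀ i, (L a) i = v i * (tgrsPoly k η aN).eval (A i) := by
      intro i
      rw [hL, Matrix.mulVecLin_apply, tgrsMatrix_mulVec hk0, tgrsPoly_eval]
    have hf0 : tgrsPoly k η aN = 0 := by
      refine poly_eq_zero_of_roots (s := Finset.univ.image A) ?_ ?_
      · intro x hx
        obtain ⟨i, _, rfl⟩ := Finset.mem_image.mp hx
        have h0 : v i * (tgrsPoly k η aN).eval (A i) = 0 := by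
          rw [← hceq i, ha]; rfl
        rcases mul_eq_zero.mp h0 with h | h
        · exact absurd h (hv i)
        · exact h
      · have hcard : (Finset.univ.image A).card = n := by
          rw [Finset.card_image_of_injective _ hA, Finset.card_univ, Fintype.card_fin]
        have := tgrsPoly_natDegree_le k η aN
        omega
    funext j
    have hcj := congrArg (fun p => Polynomial.coeff p (j : ℕ)) hf0
    simp only [tgrsPoly_coeff, Polynomial.coeff_zero] at hcj
    rw [if_pos j.isLt] at hcj
    rw [haN] at hcj
    simp only [j.isLt, dif_pos, Fin.eta] at hcj
    exact hcj
  have hfrC : finrank K (LinearMap.range L) = k := by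
    rw [LinearMap.finrank_range_of_inj hinj, Module.finrank_fin_fun]
  have hle : LinearMap.range L ≤ (dotForm K n).orthogonal (LinearMap.range L) := by
    intro x hx
    rw [LinearMap.BilinForm.mem_orthogonal_iff]
    intro y hy
    have hxc : x ∈ TGRSCode K n k A v η := by rw [hrange]; exact hx
    have hyc : y ∈ TGRSCode K n k A v η := by rw [hrange]; exact hy
    rw [mem_tgrs_iff hk0] at hxc hyc
    obtain ⟨f, hdf, hcf, hxf⟩ := hxc
    obtain ⟨g, hdg, hcg, hyg⟩ := hyc
    show dotForm K n y x = 0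
    rw [dotForm_apply, hxf, hyg]
    exact tgrs_orth hkn hk hb hW0 hW1 hW2 hdg hdf hcg hcf
  have horthrank : finrank K ((dotForm K n).orthogonal (LinearMap.range L)) = k := by
    rw [LinearMap.BilinForm.finrank_orthogonal dotForm_nondeg, hfrC,
      Module.finrank_fin_fun]
    omega
  have heq : LinearMap.range L = (dotForm K n).orthogonal (LinearMap.range L) :=
    Submodule.eq_of_le_of_finrank_le hle (by rw [horthrank, hfrC])
  have hdual : dualCode (↑(LinearMap.range L) : Set (Fin n → K))
      = ↑((dotForm K n).orthogonal (LinearMap.range L)) := by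
    ext x
    simp only [dualCode, Set.mem_setOf_eq, SetLike.mem_coe,
      LinearMap.BilinForm.mem_orthogonal_iff]
    constructor
    · intro h y hy
      show dotForm K n y x = 0
      rw [dotForm_apply, ← h y hy]
      exact Finset.sum_congr rfl fun i _ => mul_comm _ _
    · intro h y hy
      have := h y hy
      change dotForm K n y x = 0 at this
      rw [dotForm_apply] at this
      rw [← this]
      exact Finset.sum_congr rfl fun i _ => mul_comm _ _
  rw [IsSelfDual, hrange, hdual, ← heq]

lemma hwt_zero {K : Type*} [Field K] {n : ℕ} : hwt (0 : Fin n → K) = 0 := by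
  simp [hwt]

lemma tgrs_wt_lower {K : Type*} [Field K] {n k : ℕ} (hkn : n = k + k) (hk : 3 ≤ k)
    {A v : Fin n → K} (hA : Function.Injective A) (hv : ∀ i, v i ≠ 0)
    {η : K} (hη : η ≠ 0) {c : Fin n → K} (hc : c ∈ TGRSCode K n k A v η)
    (hc0 : c ≠ 0) :
    n - k ≤ hwt c ∧ (hwt c = n - k →
      ∃ I : Finset (Fin n), I.card = k ∧ ∑ i ∈ I, A i = -η⁻¹) := by
  classical
  rw [mem_tgrs_iff (by omega) A v η c] at hc
  obtain ⟨f, hdeg, hcoeff, rfl⟩ := hc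
  have hf0 : f ≠ 0 := by
    intro h
    apply hc0
    funext i
    rw [h]
    simp
  set Z := Finset.univ.filter (fun i => f.eval (A i) = 0) with hZ
  have hwtc : hwt (fun i => v i * f.eval (A i)) = n - Z.card :=
    hwt_formula hv (fun i => f.eval (A i))
  have hZroots : ∀ x ∈ Z.image A, f.eval x = 0 := by
    intro x hx
    obtain ⟨i, hi, rfl⟩ := Finset.mem_image.mp hx
    exact (Finset.mem_filter.mp hi).2
  have hZim : (Z.image A).card = Z.card := Finset.card_image_of_injective _ hA
  have hZcard : Z.card ≤ k := by
    have h1 := roots_card_le hf0 hZroots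
    omega
  refine ⟨by omega, fun hwteq => ?_⟩
  have hZk : Z.card = k := by omega
  refine ⟨Z, hZk, ?_⟩
  have hfk1 : f.coeff (k - 1) ≠ 0 := by
    intro h0
    have hd2 := natDegree_le_of_coeff_zero hdeg hcoeff h0 (by omega)
    have h1 := roots_card_le hf0 hZroots
    omega
  have hfk : f.coeff k ≠ 0 := by
    rw [hcoeff]
    exact mul_ne_zero hη hfk1
  set g := Polynomial.C (f.coeff k) * ∏ i ∈ Z, (X - Polynomial.C (A i)) with hg
  have hprodmonic : (∏ i ∈ Z, (X - Polynomial.C (A i))).Monic :=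
    monic_prod_of_monic _ _ fun i _ => monic_X_sub_C _
  have hproddeg : (∏ i ∈ Z, (X - Polynomial.C (A i))).natDegree = k := by
    rw [Polynomial.natDegree_prod _ _ (fun i _ => X_sub_C_ne_zero (A i))]
    simp [hZk]
  have hgk : g.coeff k = f.coeff k := by
    rw [hg, Polynomial.coeff_C_mul, ← hproddeg, hprodmonic.coeff_natDegree, mul_one]
  have hfg : f = g := by
    rw [← sub_eq_zero]
    refine poly_eq_zero_of_roots (s := Z.image A) ?_ ?_
    · intro x hx
      obtain ⟨i, hi, rfl⟩ := Finset.mem_image.mp hx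
      rw [Polynomial.eval_sub, hZroots _ hx, hg, Polynomial.eval_mul, Polynomial.eval_prod,
        Finset.prod_eq_zero hi (by simp), mul_zero, sub_zero]
    · have hdegg : g.natDegree ≤ k := by
        rw [hg, Polynomial.natDegree_C_mul hfk, hproddeg]
      have hcoeffsub : ∀ m, k - 1 < m → (f - g).coeff m = 0 := by
        intro m hm
        rcases eq_or_lt_of_le (show k ≤ m by omega) with h | h
        · rw [Polynomial.coeff_sub, ← h, hgk, sub_self]
        · rw [Polynomial.coeff_sub, Polynomial.coeff_eq_zero_of_natDegree_lt (by omega),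
            Polynomial.coeff_eq_zero_of_natDegree_lt (by omega), sub_self]
      have : (f - g).natDegree ≤ k - 1 :=
        Polynomial.natDegree_le_iff_coeff_eq_zero.mpr hcoeffsub
      omega
  have hc1 : f.coeff (k - 1) = f.coeff k * (-(∑ i ∈ Z, A i)) := by
    conv_lhs => rw [hfg]
    rw [hg, Polynomial.coeff_C_mul]
    have hvieta := Polynomial.prod_X_sub_C_coeff_card_pred Z (fun i => A i)
      (by rw [hZk]; omega)
    rw [hZk] at hvieta
    rw [hvieta]
  have h2 : (1 : K) = -(η * ∑ i ∈ Z, A i) := by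
    refine mul_left_cancel₀ hfk ?_
    calc f.coeff k * 1 = f.coeff k := mul_one _
      _ = η * f.coeff (k - 1) := hcoeff
      _ = η * (f.coeff k * -(∑ i ∈ Z, A i)) := by rw [← hc1]
      _ = f.coeff k * -(η * ∑ i ∈ Z, A i) := by ring
  have h3 : η * ∑ i ∈ Z, A i = -1 := by linear_combination h2
  have h4 : (∑ i ∈ Z, A i) * η = -1 := by linear_combination h3
  linear_combination η⁻¹ * h3 - (∑ i ∈ Z, A i) * mul_inv_cancel₀ hη

lemma tgrs_wt_of_multiset {K : Type*} [Field K] [DecidableEq K] {n k : ℕ} (hkn : n = k + k) (hk : 3 ≤ k)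
    (A v : Fin n → K) (hv : ∀ i, v i ≠ 0) {η : K} (hη : η ≠ 0)
    (R : Multiset K) (hcard : Multiset.card R = k) (hsum : R.sum = -η⁻¹) :
    ∃ c ∈ TGRSCode K n k A v η,
      hwt c = n - (Finset.univ.filter fun i => A i ∈ R).card := by
  classical
  set f := (R.map fun r => X - Polynomial.C r).prod with hf
  have hmono : ∀ p ∈ R.map fun r => X - Polynomial.C r, p.Monic := by
    intro p hp
    obtain ⟨r, _, rfl⟩ := Multiset.mem_map.mp hp
    exact monic_X_sub_C r
  have hmonic : f.Monic :=
    monic_multiset_prod_of_monic _ _ (fun r _ => monic_X_sub_C r)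
  have hdeg : f.natDegree = k := by
    rw [hf, Polynomial.natDegree_multiset_prod_of_monic _ hmono]
    rw [Multiset.map_map]
    simp [Function.comp, natDegree_X_sub_C, hcard]
  have hck : f.coeff k = 1 := by
    rw [← hdeg]
    exact hmonic.coeff_natDegree
  have hck1 : f.coeff (k - 1) = η⁻¹ := by
    have h := Polynomial.multiset_prod_X_sub_C_coeff_card_pred R (by rw [hcard]; omega)
    rw [hcard, hsum] at h
    rw [hf, h, neg_neg]
  have hrel : f.coeff k = η * f.coeff (k - 1) := by
    rw [hck, hck1, mul_inv_cancel₀ hη]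
  refine ⟨fun i => v i * f.eval (A i),
    (mem_tgrs_iff (by omega) A v η _).mpr ⟨f, le_of_eq hdeg, hrel, rfl⟩, ?_⟩
  have hz : ∀ i, f.eval (A i) = 0 ↔ A i ∈ R := by
    intro i
    rw [hf, Polynomial.eval_multiset_prod, Multiset.map_map, Multiset.prod_eq_zero_iff]
    constructor
    · intro h
      obtain ⟨r, hr, h0⟩ := Multiset.mem_map.mp h
      simp only [Function.comp_apply, eval_sub, eval_X, eval_C] at h0
      rw [sub_eq_zero] at h0
      exact h0 ▸ hr
    · intro h
      refine Multiset.mem_map.mpr ⟨A i, h, ?_⟩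
      simp
  have hform := hwt_formula hv (fun i => f.eval (A i))
  show hwt (fun i => v i * f.eval (A i)) = _
  rw [show hwt (fun i => v i * f.eval (A i))
    = {i | v i * f.eval (A i) ≠ 0}.ncard from rfl, hform]
  congr 1
  exact Finset.card_bij (fun i _ => i)
    (fun i hi => Finset.mem_filter.mpr ⟨Finset.mem_univ _,
      (hz i).mp (Finset.mem_filter.mp hi).2⟩)
    (fun _ _ _ _ h => h)
    (fun i hi => ⟨i, Finset.mem_filter.mpr ⟨Finset.mem_univ _,
      (hz i).mpr (Finset.mem_filter.mp hi).2⟩, rfl⟩)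

lemma tgrs_wt_exists_eq {K : Type*} [Field K] {n k : ℕ} (hkn : n = k + k) (hk : 3 ≤ k)
    {A v : Fin n → K} (hA : Function.Injective A) (hv : ∀ i, v i ≠ 0)
    {η : K} (hη : η ≠ 0) {I : Finset (Fin n)} (hI : I.card = k)
    (hsum : ∑ i ∈ I, A i = -η⁻¹) :
    ∃ c ∈ TGRSCode K n k A v η, c ≠ 0 ∧ hwt c = n - k := by
  classical
  obtain ⟨c, hcmem, hcw⟩ := tgrs_wt_of_multiset hkn hk A v hv hη (I.val.map A)
    (by simp [hI]) (by rw [← hsum]; rfl)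
  have hfilter : (Finset.univ.filter fun i => A i ∈ I.val.map A) = I := by
    ext i
    simp only [Finset.mem_filter, Finset.mem_univ, true_and, Multiset.mem_map]
    constructor
    · rintro ⟨l, hl, he⟩
      exact (hA he.symm) ▸ (by exact hl : l ∈ I)
    · intro hi
      exact ⟨i, hi, rfl⟩
  rw [hfilter, hI] at hcw
  refine ⟨c, hcmem, ?_, hcw⟩
  intro h0
  rw [h0, hwt_zero] at hcw
  omega

lemma tgrs_wt_exists_succ {K : Type*} [Field K] {n k : ℕ} (hkn : n = k + k) (hk : 3 ≤ k)
    {A v : Fin n → K} (hA : Function.Injective A) (hv : ∀ i, v i ≠ 0)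
    {η : K} (hη : η ≠ 0)
    (hno : ∀ I : Finset (Fin n), I.card = k → ∑ i ∈ I, A i ≠ -η⁻¹) :
    ∃ c ∈ TGRSCode K n k A v η, c ≠ 0 ∧ hwt c = n - k + 1 := by
  classical
  obtain ⟨I, _, hI⟩ := Finset.exists_subset_card_eq (s := (Finset.univ : Finset (Fin n))) (n := k - 1)
    (by rw [Finset.card_univ, Fintype.card_fin]; omega)
  set γ : K := -η⁻¹ - ∑ i ∈ I, A i with hγ
  obtain ⟨c, hcmem, hcw⟩ := tgrs_wt_of_multiset hkn hk A v hv hη (γ ::ₘ I.val.map A)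
    (by simp [hI]; omega) (by rw [Multiset.sum_cons, show (Multiset.map A I.val).sum = ∑ i ∈ I, A i from rfl, hγ]; ring)
  have hfilter : (Finset.univ.filter fun i => A i ∈ γ ::ₘ I.val.map A) = I := by
    ext i
    simp only [Finset.mem_filter, Finset.mem_univ, true_and, Multiset.mem_cons,
      Multiset.mem_map]
    constructor
    · rintro (he | ⟨l, hl, he⟩)
      · by_contra hiI
        refine hno (insert i I) ?_ ?_
        · rw [Finset.card_insert_of_notMem hiI, hI]; omega
        · rw [Finset.sum_insert hiI, he, hγ]; ring
      · exact (hA he.symm) ▸ (by exact hl : l ∈ I)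
    · intro hi
      exact Or.inr ⟨i, hi, rfl⟩
  rw [hfilter, hI] at hcw
  have hcw' : hwt c = n - k + 1 := by omega
  refine ⟨c, hcmem, ?_, hcw'⟩
  intro h0
  rw [h0, hwt_zero] at hcw'
  omega


end AuxTGRS

/-- in the setting of the construction from
`m(x) = (x^{n+1} - β^{n+1})/(x - β)` over `F_q`, with `v_i ∈ F_{q²}` satisfying
`v_i² = α_i(α_i - β)` and `η = 2β⁻¹`: if `Σ_{i∈I} α_i ≠ -β/2` for every `I` of size
`n/2` then `C_{n/2}(α,v,η)` is a self-dual MDS code over `F_{q²}`; otherwise it is a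
self-dual NMDS code over `F_{q²}`. -/
theorem tgrs_selfdual_mds_or_nmds_cyclotomic (q n : ℕ) (hq : Odd q)
    (hqpp : IsPrimePow q) (hn6 : 6 ≤ n) (hneven : Even n) (hdvd : (n + 1) ∣ (q - 1))
    (Fq : Type*) [Field Fq] [Fintype Fq] (hcardq : Fintype.card Fq = q)
    (F : Type*) [Field F] [Fintype F] [Algebra Fq F]
    (hcardF : Fintype.card F = q ^ 2)
    (β : Fq) (hβ : β ≠ 0)
    (α : Fin n → Fq)
    (hsplit : (∑ i ∈ Finset.range (n + 1), Polynomial.C (β ^ i) * X ^ (n - i)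
        : Fq[X]) = ∏ i, (X - Polynomial.C (α i)))
    (v : Fin n → F)
    (hv : ∀ i, v i ^ 2 = algebraMap Fq F (α i) * (algebraMap Fq F (α i)
      - algebraMap Fq F β)) :
    ((∀ I : Finset (Fin n), I.card = n / 2 → ∑ i ∈ I, α i ≠ -β / 2) →
      IsSelfDual (TGRSCode F n (n / 2) (fun i => algebraMap Fq F (α i)) v
          (2 * (algebraMap Fq F β)⁻¹)) ∧
        IsMinDist (TGRSCode F n (n / 2) (fun i => algebraMap Fq F (α i)) v
          (2 * (algebraMap Fq F β)⁻¹)) (n - n / 2 + 1)) ∧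
    ((∃ I : Finset (Fin n), I.card = n / 2 ∧ ∑ i ∈ I, α i = -β / 2) →
      IsSelfDual (TGRSCode F n (n / 2) (fun i => algebraMap Fq F (α i)) v
          (2 * (algebraMap Fq F β)⁻¹)) ∧
        IsMinDist (TGRSCode F n (n / 2) (fun i => algebraMap Fq F (α i)) v
          (2 * (algebraMap Fq F β)⁻¹)) (n - n / 2) ∧
        IsMinDist (dualCode (TGRSCode F n (n / 2)
          (fun i => algebraMap Fq F (α i)) v (2 * (algebraMap Fq F β)⁻¹))) (n / 2)) := by
  classical
  obtain ⟨k, hkk⟩ := hneven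
  have hn2 : n / 2 = k := by omega
  have hk2 : n = k + k := hkk
  have hk3 : 3 ≤ k := by omega
  rw [hn2]
  -- basic arithmetic over q
  have hq2 : 2 ≤ q := hqpp.two_le
  have hnq : n + 1 ≤ q - 1 := Nat.le_of_dvd (by omega) hdvd
  -- characteristic facts
  set p : ℕ := ringChar Fq with hp
  haveI hcharp : CharP Fq p := ringChar.charP Fq
  obtain ⟨e, hpprime, hqe⟩ := FiniteField.card Fq p
  rw [hcardq] at hqe
  have hpq : p ∣ q := hqe ▸ dvd_pow_self p (by positivity)
  have hchar2 : (2 : Fq) ≠ 0 := by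
    intro h2
    have : p ∣ 2 := by
      have := (CharP.cast_eq_zero_iff Fq p 2).mp (by exact_mod_cast h2)
      exact this
    have hp2 : p = 2 := ((Nat.prime_dvd_prime_iff_eq hpprime Nat.prime_two).mp this)
    have : 2 ∣ q := hp2 ▸ hpq
    exact (Nat.not_even_iff_odd.mpr hq) (even_iff_two_dvd.mpr this)
  have hcharn1 : ((n + 1 : ℕ) : Fq) ≠ 0 := by
    intro hc
    have h1 : p ∣ n + 1 := (CharP.cast_eq_zero_iff Fq p (n+1)).mp hc
    have h2 : p ∣ q - 1 := h1.trans hdvd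
    have h3 : p ∣ 1 := by
      have h4 := Nat.dvd_sub hpq h2
      rwa [(by omega : q - (q - 1) = 1)] at h4
    exact Nat.Prime.one_lt hpprime |>.ne' (Nat.dvd_one.mp h3)
  -- polynomial identity
  have hpoly : (∏ i, (X - Polynomial.C (α i)) : Fq[X]) * (Polynomial.C β - X)
      = Polynomial.C β ^ (n+1) - X ^ (n+1) := by
    have hg := geom_sum₂_mul (Polynomial.C β) (X : Fq[X]) (n+1)
    simp only [Nat.add_sub_cancel] at hg
    rw [← hsplit, ← hg]
    congr 1
    exact Finset.sum_congr rfl fun i _ => by rw [map_pow]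
  have heval : ∀ x : Fq, (∏ i, (x - α i)) * (β - x) = β ^ (n+1) - x ^ (n+1) := by
    intro x
    have := congrArg (Polynomial.eval x) hpoly
    simpa [Polynomial.eval_prod] using this
  have hprodβ : (∏ i, (β - α i)) = ((n + 1 : ℕ) : Fq) * β ^ n := by
    have := congrArg (Polynomial.eval β) hsplit
    simp only [Polynomial.eval_finset_sum, Polynomial.eval_mul, Polynomial.eval_pow,
      Polynomial.eval_C, Polynomial.eval_X, Polynomial.eval_prod, Polynomial.eval_sub] at this
    rw [← this]
    rw [Finset.sum_congr rfl (fun i hi => by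
      rw [← pow_add, Nat.add_sub_cancel' (Nat.lt_succ_iff.mp (Finset.mem_range.mp hi))] :
        ∀ i ∈ Finset.range (n+1), β ^ i * β ^ (n - i) = β ^ n)]
    rw [Finset.sum_const, Finset.card_range, nsmul_eq_mul]
  have hβn1 : ((n + 1 : ℕ) : Fq) * β ^ n ≠ 0 :=
    mul_ne_zero hcharn1 (pow_ne_zero _ hβ)
  have hαβ : ∀ i, α i ≠ β := by
    intro i hie
    have : (∏ j, (β - α j)) = 0 :=
      Finset.prod_eq_zero (Finset.mem_univ i) (by rw [hie, sub_self])
    rw [hprodβ] at this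
    exact hβn1 this
  have hroot : ∀ i, α i ^ (n+1) = β ^ (n+1) := by
    intro i
    have := heval (α i)
    rw [Finset.prod_eq_zero (Finset.mem_univ i) (sub_self (α i)), zero_mul] at this
    exact (sub_eq_zero.mp this.symm).symm
  have hα0 : ∀ i, α i ≠ 0 := by
    intro i h0
    have := hroot i
    rw [h0, zero_pow (by omega : n + 1 ≠ 0)] at this
    exact pow_ne_zero _ hβ this.symm
  -- separability and injectivity of α
  have hpoly2 : (∏ i, (X - Polynomial.C (α i)) : Fq[X]) * (X - Polynomial.C β)
      = X ^ (n+1) - Polynomial.C (β ^ (n+1)) := by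
    rw [map_pow]
    linear_combination (-1 : Fq[X]) * hpoly
  have hsepq : (X ^ (n+1) - Polynomial.C (β ^ (n+1)) : Fq[X]).Separable := by
    have := Polynomial.separable_X_pow_sub_C_unit (R := Fq)
      (Units.mk0 (β ^ (n+1)) (pow_ne_zero _ hβ))
      (isUnit_iff_ne_zero.mpr (by exact_mod_cast hcharn1))
    simpa using this
  have hαinj : Function.Injective α := by
    refine Polynomial.Separable.injective_of_prod_X_sub_C ?_
    rw [← hpoly2] at hsepq
    exact hsepq.of_mul_left
  -- root set and power sums
  set S : Finset Fq := (Finset.univ.image α) ∪ {β} with hS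
  have hβS : β ∉ Finset.univ.image α := by
    intro hmem
    obtain ⟨i, _, hie⟩ := Finset.mem_image.mp hmem
    exact hαβ i hie
  have hScard : S.card = n + 1 := by
    rw [hS, Finset.union_comm, ← Finset.insert_eq, Finset.card_insert_of_notMem hβS,
      Finset.card_image_of_injective _ hαinj, Finset.card_univ, Fintype.card_fin]
  have hSpow : ∀ s ∈ S, s ^ (n+1) = β ^ (n+1) := by
    intro s hs
    rcases Finset.mem_union.mp hs with h | h
    · obtain ⟨i, _, rfl⟩ := Finset.mem_image.mp h
      exact hroot i
    · rw [Finset.mem_singleton.mp h]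
  set T : Finset Fq := S.image (fun s => s * β⁻¹) with hT
  have hmulinj : Function.Injective (fun s : Fq => s * β⁻¹) := by
    intro x y h
    simpa [inv_ne_zero hβ] using mul_right_cancel₀ (inv_ne_zero hβ) h
  have hTcard : T.card = n + 1 := by
    rw [hT, Finset.card_image_of_injective _ hmulinj, hScard]
  have hTpow : ∀ t ∈ T, t ^ (n+1) = 1 := by
    intro t ht
    obtain ⟨s, hs, rfl⟩ := Finset.mem_image.mp ht
    rw [mul_pow, hSpow s hs, inv_pow, mul_inv_cancel₀ (pow_ne_zero _ hβ)]
  have hpowsum : ∀ j, 1 ≤ j → j ≤ n → ∑ i, α i ^ j = -β ^ j := by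
    intro j hj1 hjn
    have hTz := sum_pow_roots_of_unity hTpow hTcard hj1 (by omega)
    have hSz : ∑ s ∈ S, s ^ j = 0 := by
      rw [hT, Finset.sum_image (fun x _ y _ h => hmulinj h)] at hTz
      have : ∑ s ∈ S, (s * β⁻¹) ^ j = (∑ s ∈ S, s ^ j) * (β⁻¹) ^ j := by
        rw [Finset.sum_mul]
        exact Finset.sum_congr rfl fun s _ => mul_pow _ _ _
      rw [this] at hTz
      rcases mul_eq_zero.mp hTz with h | h
      · exact h
      · exact absurd h (pow_ne_zero _ (inv_ne_zero hβ))
    rw [hS, Finset.union_comm, ← Finset.insert_eq, Finset.sum_insert hβS,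
      Finset.sum_image (fun x _ y _ h => hαinj h)] at hSz
    linear_combination hSz
  -- move to F
  have hφinj : Function.Injective (algebraMap Fq F) := (algebraMap Fq F).injective
  set A : Fin n → F := fun i => algebraMap Fq F (α i) with hAdef
  set b : F := algebraMap Fq F β with hbdef
  have hb0 : b ≠ 0 := fun h => hβ (hφinj (by rw [hbdef] at h; rw [h, map_zero]))
  have h2F : (2 : F) ≠ 0 := by
    intro h
    apply hchar2
    apply hφinj
    rw [map_zero, map_ofNat]
    exact_mod_cast h
  have hη0 : (2 * b⁻¹ : F) ≠ 0 := mul_ne_zero h2F (inv_ne_zero hb0)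
  have hvne : ∀ i, v i ≠ 0 := by
    intro i h0
    have hvi := hv i
    rw [h0, pow_two, mul_zero] at hvi
    have h1 : algebraMap Fq F (α i) ≠ 0 := fun h => hα0 i (hφinj (by rw [h, map_zero]))
    have h2 : algebraMap Fq F (α i) - algebraMap Fq F β ≠ 0 := by
      rw [sub_ne_zero]; exact fun h => hαβ i (hφinj h)
    exact (mul_ne_zero h1 h2) hvi.symm
  have hAinj : Function.Injective A := fun i j h => hαinj (hφinj h)
  have hW : ∀ m : ℕ, ∑ i, v i ^ 2 * A i ^ m
      = algebraMap Fq F (∑ i, α i ^ (m+1) * (α i - β)) := by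
    intro m
    rw [map_sum]
    refine Finset.sum_congr rfl fun i _ => ?_
    simp only [hv i, hAdef, hbdef, map_mul, map_pow, map_sub]
    ring
  have hsum0 : ∀ m, m ≤ n - 2 → ∑ i, α i ^ (m+1) * (α i - β) = 0 := by
    intro m hm
    have e : ∀ i : Fin n, α i ^ (m+1) * (α i - β) = α i ^ (m+2) - β * α i ^ (m+1) := by
      intro i; ring
    rw [Finset.sum_congr rfl fun i _ => e i, Finset.sum_sub_distrib, ← Finset.mul_sum]
    rw [hpowsum (m+2) (by omega) (by omega), hpowsum (m+1) (by omega) (by omega)]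
    ring
  have hsumn1 : ∑ i, α i ^ n * (α i - β) = ((n+1 : ℕ) : Fq) * β ^ (n+1) := by
    have e : ∀ i : Fin n, α i ^ n * (α i - β) = α i ^ (n+1) - β * α i ^ n := by
      intro i; ring
    rw [Finset.sum_congr rfl fun i _ => e i, Finset.sum_sub_distrib, ← Finset.mul_sum,
      hpowsum n (by omega) (le_refl n),
      Finset.sum_congr rfl (fun i _ => hroot i), Finset.sum_const, Finset.card_univ,
      Fintype.card_fin, nsmul_eq_mul]
    push_cast
    ring
  have hsumn2 : ∑ i, α i ^ (n+1) * (α i - β)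
      = -(((n+1 : ℕ) : Fq) * β ^ (n+1) * β) := by
    have e : ∀ i : Fin n, α i ^ (n+1) * (α i - β) = β ^ (n+1) * α i - β * β ^ (n+1) := by
      intro i
      rw [show α i ^ (n+1) * (α i - β) = α i ^ (n+1) * α i - α i ^ (n+1) * β from by ring,
        hroot i]
      ring
    have h1 : ∑ i, α i = -β := by
      have := hpowsum 1 (le_refl 1) (by omega)
      simpa using this
    rw [Finset.sum_congr rfl fun i _ => e i, Finset.sum_sub_distrib, ← Finset.mul_sum, h1,
      Finset.sum_const, Finset.card_univ, Fintype.card_fin, nsmul_eq_mul]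
    push_cast
    ring
  set D : F := algebraMap Fq F (((n+1 : ℕ) : Fq) * β ^ (n+1)) with hD
  have hW0 : ∀ m ≤ n - 2, ∑ i, v i ^ 2 * A i ^ m = 0 := fun m hm => by
    rw [hW, hsum0 m hm, map_zero]
  have hW1 : ∑ i, v i ^ 2 * A i ^ (n-1) = D := by
    rw [hW, (by omega : n - 1 + 1 = n), hsumn1, hD]
  have hW2 : ∑ i, v i ^ 2 * A i ^ n = -(D * b) := by
    rw [hW, hsumn2, map_neg, map_mul, hD, hbdef]
  have hsumiff : ∀ I : Finset (Fin n),
      (∑ i ∈ I, A i = -(2 * b⁻¹)⁻¹) ↔ (∑ i ∈ I, α i = -β / 2) := by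
    intro I
    have hmap : ∑ i ∈ I, A i = algebraMap Fq F (∑ i ∈ I, α i) := by
      rw [map_sum]
    have hval : -(2 * b⁻¹ : F)⁻¹ = algebraMap Fq F (-β / 2) := by
      rw [map_div₀, map_neg, map_ofNat, mul_inv, inv_inv, hbdef]
      ring
    constructor
    · intro h
      apply hφinj
      rw [← hmap, h, hval]
    · intro h
      rw [hmap, h, hval]
  have hself : IsSelfDual (TGRSCode F n k A v (2 * b⁻¹)) :=
    tgrs_selfdual hk2 hk3 hAinj hvne hb0 hW0 hW1 hW2
  constructor
  · intro hno
    refine ⟨hself, ?_, ?_⟩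
    · obtain ⟨c, hc, hc0, hcw⟩ := tgrs_wt_exists_succ hk2 hk3 hAinj hvne hη0
        (fun I hI hs => hno I hI ((hsumiff I).mp hs))
      exact ⟨c, hc, hc0, hcw⟩
    · intro c hc hc0
      obtain ⟨h1, h2⟩ := tgrs_wt_lower hk2 hk3 hAinj hvne hη0 hc hc0
      by_contra hlt
      push_neg at hlt
      have heq : hwt c = n - k := by omega
      obtain ⟨I, hIc, hIs⟩ := h2 heq
      exact hno I hIc ((hsumiff I).mp hIs)
  · rintro ⟨I, hIc, hIs⟩
    have hmd : IsMinDist (TGRSCode F n k A v (2 * b⁻¹)) (n - k) := by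
      constructor
      · exact tgrs_wt_exists_eq hk2 hk3 hAinj hvne hη0 hIc ((hsumiff I).mpr hIs)
      · intro c hc hc0
        exact (tgrs_wt_lower hk2 hk3 hAinj hvne hη0 hc hc0).1
    refine ⟨hself, hmd, ?_⟩
    rw [← hself]
    have hnk : n - k = k := by omega
    rw [hnk] at hmd
    exact hmd
end
end

section
/- Let F be a field, k ≥ 1 an integer, η ∈ F, and x_1,…,x_k ∈ F. Let M be the k×k matrix whose (i,j)-entry is x_j^{i−1} for 1 ≤ i ≤ k−1 and whose last row has entries x_j^{k−1} + η x_j^k (1 ≤ j ≤ k). Then det(M) = ∏_{1 ≤ s < t ≤ k} (x_t − x_s) · (1 + η Σ_{s=1}^k x_s). -/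
open Finset Polynomial

/-- the determinant of the twisted Vandermonde matrix whose rows are
`(x_j^{i})_j` for `0 ≤ i ≤ k-2` and whose last row is `(x_j^{k-1} + η x_j^k)_j`
equals `∏_{s<t} (x_t - x_s) · (1 + η Σ_s x_s)`. -/
theorem twisted_vandermonde_det (F : Type*) [Field F] (k : ℕ) (hk : 1 ≤ k)
    (η : F) (x : Fin k → F) :
    Matrix.det (Matrix.of fun i j : Fin k =>
      if (i : ℕ) < k - 1 then x j ^ (i : ℕ) else x j ^ (k - 1) + η * x j ^ k) =
    (∏ s : Fin k, ∏ t ∈ Finset.Ioi s, (x t - x s)) * (1 + η * ∑ s, x s) := by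
  set p : Polynomial F := ∏ s : Fin k, (X - C (x s)) with hp
  have hmonic : p.Monic := monic_prod_of_monic _ _ fun s _ => monic_X_sub_C _
  have hdeg : p.natDegree = k := by
    rw [hp, natDegree_prod_of_monic _ _ fun s _ => monic_X_sub_C _]
    simp [natDegree_X_sub_C]
  have hcoeffk : p.coeff k = 1 := by
    have := hmonic.leadingCoeff
    rwa [leadingCoeff, hdeg] at this
  have hcoeffk1 : p.coeff (k - 1) = -∑ s, x s := by
    have := prod_X_sub_C_coeff_card_pred (univ : Finset (Fin k)) x
      (by simp [Fintype.card_fin]; omega)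
    simpa [Fintype.card_fin] using this
  have hevalsum : ∀ j : Fin k,
      ∑ i : Fin k, p.coeff i * x j ^ (i : ℕ) = -(x j ^ k) := by
    intro j
    have h0 : p.eval (x j) = 0 := by
      rw [hp, eval_prod]
      exact Finset.prod_eq_zero (Finset.mem_univ j) (by simp)
    have := eval_eq_sum_range' (n := k + 1) (by omega : p.natDegree < k + 1) (x j)
    rw [Finset.sum_range_succ, hcoeffk, one_mul, h0] at this
    have h2 : ∑ i : Fin k, p.coeff i * x j ^ (i : ℕ)
        = ∑ i ∈ Finset.range k, p.coeff i * x j ^ i :=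
      Fin.sum_univ_eq_sum_range (fun i => p.coeff i * x j ^ i) k
    rw [h2]
    linear_combination -this
  set A : Matrix (Fin k) (Fin k) F := Matrix.of fun i j : Fin k => x j ^ (i : ℕ) with hA
  set last : Fin k := ⟨k - 1, by omega⟩ with hlast
  set c : Fin k → F := fun i =>
    -(η * p.coeff i) + (if i = last then 1 else 0) with hc
  have hM : (Matrix.of fun i j : Fin k =>
      if (i : ℕ) < k - 1 then x j ^ (i : ℕ) else x j ^ (k - 1) + η * x j ^ k)
      = A.updateRow last (∑ i, c i • A i) := by
    ext i j
    by_cases hi : i = last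
    · subst hi
      rw [Matrix.updateRow_self]
      have hzero : ¬ ((last : ℕ) < k - 1) := by simp [hlast]
      simp only [Matrix.of_apply, hzero, if_false]
      have : (∑ i : Fin k, c i • A i) j = ∑ i : Fin k, c i * x j ^ (i : ℕ) := by
        simp [hA]
      rw [this]
      have split : ∑ i : Fin k, c i * x j ^ (i : ℕ)
          = ∑ i : Fin k, (-(η * p.coeff i)) * x j ^ (i : ℕ)
            + ∑ i : Fin k, (if i = last then 1 else 0) * x j ^ (i : ℕ) := by
        rw [← Finset.sum_add_distrib]
        congr 1; ext i; rw [hc]; ring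
      rw [split]
      have h1 : ∑ i : Fin k, (-(η * p.coeff i)) * x j ^ (i : ℕ)
          = η * x j ^ k := by
        have : ∑ i : Fin k, (-(η * p.coeff i)) * x j ^ (i : ℕ)
            = -(η * ∑ i : Fin k, p.coeff i * x j ^ (i : ℕ)) := by
          rw [Finset.mul_sum, ← Finset.sum_neg_distrib]
          congr 1; ext i; ring
        rw [this, hevalsum j]; ring
      have h2 : ∑ i : Fin k, (if i = last then 1 else 0) * x j ^ (i : ℕ)
          = x j ^ (k - 1) := by
        simp only [ite_mul, one_mul, zero_mul]
        rw [Finset.sum_ite_eq' univ last (fun i => x j ^ (i : ℕ))]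
        simp [hlast]
      rw [h1, h2]
      ring
    · rw [Matrix.updateRow_ne hi]
      have : (i : ℕ) < k - 1 := by
        have h1 : (i : ℕ) ≤ k - 1 := by omega
        rcases lt_or_eq_of_le h1 with h | h
        · exact h
        · exact absurd (Fin.ext h : i = last) hi
      simp [hA, this]
  have hclast : c last = -(η * p.coeff (k - 1)) + 1 := by
    simp [hc, hlast]
  have hdetA : A.det = ∏ s : Fin k, ∏ t ∈ Finset.Ioi s, (x t - x s) := by
    have h : A = (Matrix.vandermonde x).transpose := by
      ext i j
      simp [hA, Matrix.vandermonde, Matrix.transpose_apply]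
    rw [h, Matrix.det_transpose, Matrix.det_vandermonde]
  rw [hM, Matrix.det_updateRow_sum, smul_eq_mul, hclast, hcoeffk1, hdetA]
  ring
end
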